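/- arXiv:math/0410619 — 10 statements merged into one kernel-verified Lean document; each statement's English description precedes it below -/
import Mathlib

section
/- For all real numbers a, b and every integer k ≥ 2, (a-b)^{2k} ≥ a^{2k} + b^{2k} - 2k(a^{2k-1} b + a b^{2k-1}). -/
lemma bern_even (m : ℕ) (u : ℝ) : 1 + (2*m+2 : ℝ) * u ≤ (1+u)^(2*m+2) := by
  rcases le_or_gt (-2) u with h | h
  · have := one_add_mul_le_pow h (2*m+2)
    push_cast at this
    convert this using 2
  · have h1 : (0:ℝ) ≤ (1+u)^(2*m+2) := Even.pow_nonneg (by exact ⟨m+1, by ring⟩) _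
    nlinarith [h1]

lemma tangent (m : ℕ) (y t : ℝ) :
    y^(2*m+2) + (2*m+2 : ℝ) * y^(2*m+1) * t ≤ (y+t)^(2*m+2) := by
  rcases eq_or_ne y 0 with rfl | hy
  · have ht : (0:ℝ) ≤ t^(2*m+2) := Even.pow_nonneg ⟨m+1, by ring⟩ t
    simpa using ht
  · have h := bern_even m (t/y)
    have hyp : (0:ℝ) ≤ y^(2*m+2) := Even.pow_nonneg ⟨m+1, by ring⟩ _
    have := mul_le_mul_of_nonneg_left h hyp
    have e1 : y^(2*m+2) * (1+t/y)^(2*m+2) = (y+t)^(2*m+2) := by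
      rw [← mul_pow]; field_simp
    have e2 : y^(2*m+2) * (1 + (2*m+2:ℝ)*(t/y)) = y^(2*m+2) + (2*m+2:ℝ)*y^(2*m+1)*t := by
      field_simp
      ring
    rw [e2, e1] at this
    exact this

lemma three (x y : ℝ) (hx : 0 ≤ x) (hy : 0 ≤ y) : ∀ n : ℕ,
    x^(n+2) + (n+2:ℝ)*x^(n+1)*y + ((n+2:ℝ)*(n+1)/2)*x^n*y^2 ≤ (x+y)^(n+2) := by
  intro n
  induction n with
  | zero => nlinarith [sq_nonneg (x+y)]
  | succ n ih =>
      have hxy : (0:ℝ) ≤ x + y := by linarith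
      have h2 := mul_le_mul_of_nonneg_right ih hxy
      have e : (x+y)^(n+2)*(x+y) = (x+y)^(n+3) := by ring
      have expand : (x^(n+2) + ((n:ℝ)+2)*x^(n+1)*y + ((n:ℝ)+2)*((n:ℝ)+1)/2*x^n*y^2) * (x+y)
          = x^(n+3) + ((n:ℝ)+3)*x^(n+2)*y + ((n:ℝ)+3)*((n:ℝ)+2)/2*x^(n+1)*y^2
            + ((n:ℝ)+2)*((n:ℝ)+1)/2*x^n*y^3 := by ring
      have hcube : (0:ℝ) ≤ ((n:ℝ)+2)*((n:ℝ)+1)/2*x^n*y^3 := by positivity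
      have goal' : x^(n+3) + ((n:ℝ)+3)*x^(n+2)*y + ((n:ℝ)+3)*((n:ℝ)+2)/2*x^(n+1)*y^2
          ≤ (x+y)^(n+3) := by linarith
      push_cast
      convert goal' using 3 <;> push_cast <;> ring

lemma key (j : ℕ) (a b : ℝ) (hb : |b| ≤ a) :
    a^(2*j+4) + b^(2*j+4) - (2*(j:ℝ)+4) * (a^(2*j+3)*b + a*b^(2*j+3)) ≤ (a-b)^(2*j+4) := by
  have ha : 0 ≤ a := le_trans (abs_nonneg b) hb
  have hba : b ≤ a := le_trans (le_abs_self b) hb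
  rcases le_or_gt 0 b with hb0 | hb0
  · -- 0 ≤ b ≤ a : tangent at a
    have ht := tangent (j+1) a (-b)
    have e4 : 2*(j+1)+2 = 2*j+4 := by ring
    have e3 : 2*(j+1)+1 = 2*j+3 := by ring
    rw [e4, e3] at ht
    have hfin : b^(2*j+4) ≤ (2*(j:ℝ)+4) * (a * b^(2*j+3)) := by
      have h1 : (0:ℝ) ≤ b^(2*j+3) := pow_nonneg hb0 _
      have h2 : b * b^(2*j+3) ≤ a * b^(2*j+3) := mul_le_mul_of_nonneg_right hba h1
      have h3 : b^(2*j+4) = b * b^(2*j+3) := by ring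
      nlinarith [mul_nonneg ha h1]
    have e : a + -b = a - b := by ring
    rw [e] at ht
    push_cast at ht
    nlinarith [ht, hfin]
  · -- b < 0 : write b = -c
    obtain ⟨c, rfl⟩ : ∃ c, b = -c := ⟨-b, (neg_neg b).symm⟩
    have hc0 : 0 ≤ c := by linarith [neg_lt_zero.mp hb0]
    have hca : c ≤ a := by rwa [abs_neg, abs_of_nonneg hc0] at hb
    have hb4 : (-c)^(2*j+4) = c^(2*j+4) := Even.neg_pow ⟨j+2, by ring⟩ c
    have hb3 : (-c)^(2*j+3) = -c^(2*j+3) := Odd.neg_pow ⟨j+1, by ring⟩ c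
    have hab : a - -c = a + c := by ring
    rw [hb4, hb3, hab]
    have h3 := three a c ha hc0 (2*j+2)
    have e4 : 2*j+2+2 = 2*j+4 := by ring
    have e3 : 2*j+2+1 = 2*j+3 := by ring
    rw [e4, e3] at h3
    push_cast at h3
    -- need : c^(2j+4) + (2j+4) a c^(2j+3) ≤ D a^(2j+2) c^2
    have f1 : c^(2*j+4) ≤ a^(2*j+2) * c^2 := by
      have := pow_le_pow_left₀ hc0 hca (2*j+2)
      calc c^(2*j+4) = c^(2*j+2) * c^2 := by ring
        _ ≤ a^(2*j+2) * c^2 := mul_le_mul_of_nonneg_right this (sq_nonneg c)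
    have f2 : a * c^(2*j+3) ≤ a^(2*j+2) * c^2 := by
      have h5 : c^(2*j+1) ≤ a^(2*j+1) := pow_le_pow_left₀ hc0 hca _
      have : a * c^(2*j+1) ≤ a * a^(2*j+1) := mul_le_mul_of_nonneg_left h5 ha
      calc a * c^(2*j+3) = (a * c^(2*j+1)) * c^2 := by ring
        _ ≤ (a * a^(2*j+1)) * c^2 := mul_le_mul_of_nonneg_right this (sq_nonneg c)
        _ = a^(2*j+2) * c^2 := by ring
    have hA : (0:ℝ) ≤ a^(2*j+2) * c^2 := by positivity
    have hf2' := mul_le_mul_of_nonneg_left f2 (show (0:ℝ) ≤ 2*(j:ℝ)+4 by positivity)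
    have hj : (0:ℝ) ≤ (j:ℝ) := Nat.cast_nonneg j
    nlinarith [h3, f1, hf2', hA, mul_nonneg hj hA, mul_nonneg (mul_nonneg hj hj) hA]

lemma key2 (j : ℕ) (a b : ℝ) (h : |b| ≤ |a|) :
    a^(2*j+4) + b^(2*j+4) - (2*(j:ℝ)+4) * (a^(2*j+3)*b + a*b^(2*j+3)) ≤ (a-b)^(2*j+4) := by
  rcases le_total 0 a with ha | ha
  · exact key j a b (by rwa [abs_of_nonneg ha] at h)
  · have h' : |-b| ≤ -a := by rw [abs_neg]; rwa [abs_of_nonpos ha] at h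
    have hk := key j (-a) (-b) h'
    have e1 : (-a)^(2*j+4) = a^(2*j+4) := Even.neg_pow ⟨j+2, by ring⟩ a
    have e2 : (-b)^(2*j+4) = b^(2*j+4) := Even.neg_pow ⟨j+2, by ring⟩ b
    have e3 : (-a)^(2*j+3) = -a^(2*j+3) := Odd.neg_pow ⟨j+1, by ring⟩ a
    have e4 : (-b)^(2*j+3) = -b^(2*j+3) := Odd.neg_pow ⟨j+1, by ring⟩ b
    have e5 : (-a) - (-b) = -(a-b) := by ring
    have e6 : (-(a-b))^(2*j+4) = (a-b)^(2*j+4) := Even.neg_pow ⟨j+2, by ring⟩ _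
    rw [e1, e2, e3, e5, e6, e4] at hk
    nlinarith [hk]

theorem stmt_1 (a b : ℝ) (k : ℕ) (hk : 2 ≤ k) :
    (a - b) ^ (2 * k) ≥
      a ^ (2 * k) + b ^ (2 * k)
        - 2 * (k : ℝ) * (a ^ (2 * k - 1) * b + a * b ^ (2 * k - 1)) := by
  obtain ⟨j, rfl⟩ : ∃ j, k = j + 2 := ⟨k - 2, by omega⟩
  have e4 : 2*(j+2) = 2*j+4 := by ring
  have e3 : 2*j+4-1 = 2*j+3 := by omega
  rw [e4, e3]
  have ec : (2:ℝ) * ((j:ℝ)+2) = 2*(j:ℝ)+4 := by ring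
  push_cast
  rw [ec]
  rcases le_total |b| |a| with h | h
  · exact key2 j a b h
  · have hk2 := key2 j b a h
    have e5 : (b - a) = -(a-b) := by ring
    have e6 : (-(a-b))^(2*j+4) = (a-b)^(2*j+4) := Even.neg_pow ⟨j+2, by ring⟩ _
    rw [e5, e6] at hk2
    nlinarith [hk2]
end

section
/- For every real number a, every real number b > 0, and every positive integer k, (a+b)^{2k-1} - a^{2k-1} ≥ 4^{1-k} b^{2k-1}. -/
open Finset in
lemma aux_key (x c : ℝ) (hc : 0 ≤ c) (n : ℕ) (hn : Odd n) :
    2 * c ^ n ≤ (x + c) ^ n - (x - c) ^ n := by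
  have h1 : (x + c) ^ n = ∑ i ∈ range (n + 1), x ^ i * c ^ (n - i) * n.choose i :=
    add_pow x c n
  have h2 : (x - c) ^ n = ∑ i ∈ range (n + 1), x ^ i * (-c) ^ (n - i) * n.choose i := by
    rw [sub_eq_add_neg]; exact add_pow x (-c) n
  rw [h1, h2, ← Finset.sum_sub_distrib]
  have hsplit := Finset.sum_range_succ'
    (fun i => x ^ i * c ^ (n - i) * n.choose i - x ^ i * (-c) ^ (n - i) * n.choose i) n
  rw [hsplit]
  have h0 : x ^ 0 * c ^ (n - 0) * (n.choose 0 : ℝ) - x ^ 0 * (-c) ^ (n - 0) * n.choose 0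
      = 2 * c ^ n := by
    simp [hn.neg_pow]
    ring
  rw [h0]
  have hrest : 0 ≤ ∑ i ∈ range n,
      (x ^ (i + 1) * c ^ (n - (i + 1)) * n.choose (i + 1)
        - x ^ (i + 1) * (-c) ^ (n - (i + 1)) * n.choose (i + 1)) := by
    apply Finset.sum_nonneg
    intro i hi
    rcases Nat.even_or_odd (n - (i + 1)) with he | ho
    · rw [he.neg_pow]; simp
    · have hieven : Even (i + 1) := by
        rcases Nat.even_or_odd (i + 1) with h | h
        · exact h
        · exfalso
          have hle : i + 1 ≤ n := Finset.mem_range.mp hi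
          have h1 := Nat.odd_iff.mp ho
          have h2 := Nat.odd_iff.mp h
          have h3 := Nat.odd_iff.mp hn
          omega
      rw [ho.neg_pow]
      have hx : 0 ≤ x ^ (i + 1) := hieven.pow_nonneg x
      have : x ^ (i + 1) * c ^ (n - (i + 1)) * n.choose (i + 1)
          - x ^ (i + 1) * -c ^ (n - (i + 1)) * n.choose (i + 1)
          = 2 * (x ^ (i + 1) * c ^ (n - (i + 1)) * n.choose (i + 1)) := by ring
      rw [this]
      positivity
  linarith

theorem stmt_2 (a b : ℝ) (hb : 0 < b) (k : ℕ) (hk : 1 ≤ k) :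
    (a + b) ^ (2 * k - 1) - a ^ (2 * k - 1) ≥
      (4 : ℝ) ^ ((1 : ℤ) - (k : ℤ)) * b ^ (2 * k - 1) := by
  set n := 2 * k - 1 with hn
  have hodd : Odd n := by
    rw [hn]; rcases k with _ | k; · omega
    exact ⟨k, by omega⟩
  have hkey := aux_key (a + b / 2) (b / 2) (by linarith) n hodd
  have he1 : a + b / 2 + b / 2 = a + b := by ring
  have he2 : a + b / 2 - b / 2 = a := by ring
  rw [he1, he2] at hkey
  have hpow : 2 * (b / 2) ^ n = (4 : ℝ) ^ ((1 : ℤ) - (k : ℤ)) * b ^ n := by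
    rw [div_pow]
    have h4 : (4 : ℝ) ^ ((1 : ℤ) - (k : ℤ)) = (2 : ℝ) ^ ((2 : ℤ) - 2 * k) := by
      rw [show (4 : ℝ) = (2 : ℝ) ^ (2 : ℤ) by norm_num, ← zpow_mul]
      ring_nf
    rw [h4]
    have hnz : (n : ℤ) = 2 * k - 1 := by rw [hn]; omega
    have h5 : (2 : ℝ) ^ ((2 : ℤ) - 2 * k) = 2 * ((2 : ℝ) ^ n)⁻¹ := by
      rw [show ((2 : ℤ) - 2 * k) = 1 + -(n : ℤ) by omega,
        zpow_add₀ (by norm_num : (2:ℝ) ≠ 0), zpow_neg, zpow_natCast, zpow_one]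
    rw [h5]; ring
  linarith
end

section
/- Let p, q ∈ L¹(𝕋) where 𝕋 = ℝ/2πℤ, and let 0 ≤ α < 1/2. Then ∫_{Ω_α} p(t+x) q(t-x) dt dx = (1/2)(∫₀^{2π} p)(∫₀^{2π} q) - (1/2)∫_{-2απ}^{2απ} ∫₀^{2π} p(y) q(z+y) dy dz, where Ω_α := 𝕋 × (απ, π - απ). -/
open MeasureTheory Real Set

noncomputable def L2 (a b c d : ℝ) : (ℝ × ℝ) →ₗ[ℝ] (ℝ × ℝ) :=
  (a • LinearMap.fst ℝ ℝ ℝ + b • LinearMap.snd ℝ ℝ ℝ).prod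
    (c • LinearMap.fst ℝ ℝ ℝ + d • LinearMap.snd ℝ ℝ ℝ)

lemma L2_apply (a b c d : ℝ) (w : ℝ × ℝ) :
    L2 a b c d w = (a * w.1 + b * w.2, c * w.1 + d * w.2) := by
  simp [L2, smul_eq_mul]

lemma L2_det (a b c d : ℝ) : LinearMap.det (L2 a b c d) = a * d - b * c := by
  rw [← LinearMap.det_toMatrix (Module.Basis.finTwoProd ℝ), Matrix.det_fin_two]
  simp [LinearMap.toMatrix_apply, Module.Basis.finTwoProd_zero, Module.Basis.finTwoProd_one, L2_apply,
    Module.Basis.coe_finTwoProd_repr]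

lemma integrable_comp_L2 {f : ℝ × ℝ → ℝ} (hf : Integrable f (volume : Measure (ℝ × ℝ)))
    (a b c d : ℝ) (h : a * d - b * c ≠ 0) :
    Integrable (fun w : ℝ × ℝ => f (a * w.1 + b * w.2, c * w.1 + d * w.2))
      (volume : Measure (ℝ × ℝ)) := by
  have hdet : LinearMap.det (L2 a b c d) ≠ 0 := by rw [L2_det]; exact h
  have hmap := Measure.map_linearMap_addHaar_eq_smul_addHaar (volume : Measure (ℝ × ℝ)) hdet
  have h1 : Integrable f (Measure.map (L2 a b c d) (volume : Measure (ℝ × ℝ))) := by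
    rw [hmap]
    exact hf.smul_measure ENNReal.ofReal_ne_top
  have h2 : Integrable (f ∘ (L2 a b c d)) (volume : Measure (ℝ × ℝ)) := by
    refine (integrable_map_measure ?_ ?_).mp h1
    · rw [hmap]
      exact hf.aestronglyMeasurable.smul_measure _
    · exact (L2 a b c d).continuous_of_finiteDimensional.measurable.aemeasurable
  have : (fun w : ℝ × ℝ => f (a * w.1 + b * w.2, c * w.1 + d * w.2)) = f ∘ (L2 a b c d) := by
    funext w; simp [Function.comp, L2_apply]
  rw [this]; exact h2

lemma per_int {f : ℝ → ℝ} (hf : Function.Periodic f (2 * π))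
    (hint : IntegrableOn f (Ioc 0 (2 * π))) :
    IntegrableOn f (Ioc (-(2 * π)) (4 * π)) := by
  have h1 : IntervalIntegrable f volume 0 (2 * π) :=
    (intervalIntegrable_iff_integrableOn_Ioc_of_le (by positivity)).mpr hint
  have h2 : IntervalIntegrable f volume (-(2 * π)) 0 := by
    have h := h1.comp_add_right (2 * π)
    have e : (fun x => f (x + 2 * π)) = f := funext fun x => hf x
    rw [e] at h
    simpa using h
  have h3 : IntervalIntegrable f volume (2 * π) (4 * π) := by
    have h := h1.comp_sub_right (2 * π)
    have e : (fun x => f (x - 2 * π)) = f := funext fun x => hf.sub_eq x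
    rw [e] at h
    simpa [show (0:ℝ) + 2 * π = 2 * π by ring, show (2:ℝ) * π + 2 * π = 4 * π by ring] using h
  exact (intervalIntegrable_iff_integrableOn_Ioc_of_le
    (by nlinarith [pi_pos])).mp ((h2.trans h1).trans h3)

theorem stmt_4 (p q : ℝ → ℝ) (α : ℝ) (hα0 : 0 ≤ α) (hα1 : α < 1/2)
    (hp : Function.Periodic p (2 * π)) (hq : Function.Periodic q (2 * π))
    (hpm : Measurable p) (hqm : Measurable q)
    (hpint : IntegrableOn p (Ioc 0 (2 * π))) (hqint : IntegrableOn q (Ioc 0 (2 * π))) :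
    (∫ z in (Ioc 0 (2 * π)) ×ˢ (Ioo (α * π) (π - α * π)), p (z.1 + z.2) * q (z.1 - z.2)) =
      (1/2) * (∫ s in Ioc 0 (2 * π), p s) * (∫ s in Ioc 0 (2 * π), q s)
        - (1/2) * ∫ z in Ioc (-(2 * α * π)) (2 * α * π), ∫ y in Ioc 0 (2 * π), p y * q (z + y) := by
  have hπ := pi_pos
  rw [show (2 * α * π : ℝ) = 2 * (α * π) by ring]
  set a := α * π with ha_def
  have ha0 : 0 ≤ a := by positivity
  have ha2 : 2 * a < π := by rw [ha_def]; nlinarith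
  -- indicator versions
  set K : Set ℝ := Ioc (-(2 * π)) (4 * π) with hK_def
  have hKm : MeasurableSet K := measurableSet_Ioc
  set P : ℝ → ℝ := K.indicator p with hP_def
  set Q : ℝ → ℝ := K.indicator q with hQ_def
  have hPi : Integrable P := (per_int hp hpint).integrable_indicator hKm
  have hQi : Integrable Q := (per_int hq hqint).integrable_indicator hKm
  have hF : Integrable (fun w : ℝ × ℝ => P w.1 * Q w.2) (volume : Measure (ℝ × ℝ)) := by
    rw [Measure.volume_eq_prod]
    exact hPi.mul_prod hQi
  have hA : Integrable (fun w : ℝ × ℝ => P (w.1 + w.2) * Q (w.1 - w.2))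
      (volume : Measure (ℝ × ℝ)) := by
    have h := integrable_comp_L2 hF 1 1 1 (-1) (by norm_num)
    simpa [one_mul, neg_one_mul, ← sub_eq_add_neg] using h
  have hZ : Integrable (fun w : ℝ × ℝ => P w.2 * Q (w.2 - w.1))
      (volume : Measure (ℝ × ℝ)) := by
    have h := integrable_comp_L2 hF 0 1 (-1) 1 (by norm_num)
    simpa [zero_mul, one_mul, zero_add, neg_one_mul, neg_add_eq_sub] using h
  -- integrability on the box
  have hbox : IntegrableOn (fun w : ℝ × ℝ => p (w.1 + w.2) * q (w.1 - w.2))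
      ((Ioc 0 (2 * π)) ×ˢ (Ioo a (π - a))) (volume : Measure (ℝ × ℝ)) := by
    refine (hA.integrableOn).congr_fun ?_ (measurableSet_Ioc.prod measurableSet_Ioo)
    rintro ⟨t, x⟩ ⟨ht, hx⟩
    simp only [hP_def, hQ_def]
    rw [indicator_of_mem, indicator_of_mem] <;>
      · rw [hK_def, mem_Ioc]
        constructor <;> nlinarith [ht.1, ht.2, hx.1, hx.2, ha0, ha2, hπ]
  have hbox2 : IntegrableOn (fun w : ℝ × ℝ => p w.2 * q (w.2 - w.1))
      ((Ioc (-(2 * π)) (2 * π)) ×ˢ (Ioc 0 (2 * π))) (volume : Measure (ℝ × ℝ)) := by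
    refine (hZ.integrableOn).congr_fun ?_ (measurableSet_Ioc.prod measurableSet_Ioc)
    rintro ⟨z, y⟩ ⟨hz, hy⟩
    simp only [hP_def, hQ_def]
    rw [indicator_of_mem, indicator_of_mem] <;>
      · rw [hK_def, mem_Ioc]
        constructor <;> nlinarith [hy.1, hy.2, hz.1, hz.2, hπ]
  -- the convolution-type function g
  set g : ℝ → ℝ := fun z => ∫ y in Ioc 0 (2 * π), p y * q (y - z) with hg_def
  have hgOn : IntegrableOn g (Ioc (-(2 * π)) (2 * π)) := by
    have h := hbox2
    rw [IntegrableOn, Measure.volume_eq_prod, ← Measure.prod_restrict] at h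
    exact h.integral_prod_left
  have hg1 : IntervalIntegrable g volume (-(2 * a)) (2 * a) := by
    refine (intervalIntegrable_iff_integrableOn_Ioc_of_le (by linarith)).mpr
      (hgOn.mono_set (Ioc_subset_Ioc (by linarith) (by linarith)))
  have hg2 : IntervalIntegrable g volume (2 * a) (2 * π - 2 * a) := by
    refine (intervalIntegrable_iff_integrableOn_Ioc_of_le (by linarith)).mpr
      (hgOn.mono_set (Ioc_subset_Ioc (by linarith) (by linarith)))
  have hper_g : Function.Periodic g (2 * π) := by
    intro z
    simp only [hg_def]
    have h : ∀ y : ℝ, p y * q (y - (z + 2 * π)) = p y * q (y - z) := by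
      intro y
      rw [show y - (z + 2 * π) = (y - z) - 2 * π by ring, hq.sub_eq]
    simp only [h]
  have hEq2 : (∫ z in (-(2 * a))..(2 * π - 2 * a), g z) = ∫ z in (0:ℝ)..(2 * π), g z := by
    have h := hper_g.intervalIntegral_add_eq (-(2 * a)) 0
    rw [show -(2 * a) + 2 * π = 2 * π - 2 * a by ring, zero_add] at h
    exact h
  have hEq1 : (∫ z in (2 * a)..(2 * π - 2 * a), g z)
      = (∫ z in (0:ℝ)..(2 * π), g z) - ∫ z in (-(2 * a))..(2 * a), g z := by
    rw [← hEq2, ← intervalIntegral.integral_add_adjacent_intervals hg1 hg2]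
    ring
  have hG : (∫ z in (0:ℝ)..(2 * π), g z)
      = (∫ s in Ioc 0 (2 * π), p s) * (∫ s in Ioc 0 (2 * π), q s) := by
    rw [intervalIntegral.integral_of_le (by positivity)]
    simp only [hg_def]
    have hswap : (∫ z in Ioc 0 (2 * π), ∫ y in Ioc 0 (2 * π), p y * q (y - z))
        = ∫ y in Ioc 0 (2 * π), ∫ z in Ioc 0 (2 * π), p y * q (y - z) := by
      apply integral_integral_swap
      rw [Measure.prod_restrict]
      have hsub : (Ioc (0:ℝ) (2 * π)) ×ˢ (Ioc (0:ℝ) (2 * π))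
          ⊆ (Ioc (-(2 * π)) (2 * π)) ×ˢ (Ioc (0:ℝ) (2 * π)) :=
        prod_mono (Ioc_subset_Ioc (by linarith) le_rfl) subset_rfl
      have h := hbox2.mono_set hsub
      rwa [IntegrableOn, Measure.volume_eq_prod] at h
    rw [hswap]
    have hin : ∀ y : ℝ, (∫ z in Ioc 0 (2 * π), p y * q (y - z))
        = p y * ∫ s in Ioc 0 (2 * π), q s := by
      intro y
      rw [integral_const_mul]
      congr 1
      rw [← intervalIntegral.integral_of_le (by positivity),
        intervalIntegral.integral_comp_sub_left q y]
      have h := hq.intervalIntegral_add_eq (y - 2 * π) 0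
      rw [show y - 2 * π + 2 * π = y by ring, zero_add] at h
      rw [sub_zero, h, intervalIntegral.integral_of_le (by positivity)]
    simp only [hin]
    rw [integral_mul_const]
  have hH : (∫ z in (-(2 * a))..(2 * a), g z)
      = ∫ z in Ioc (-(2 * a)) (2 * a), ∫ y in Ioc 0 (2 * π), p y * q (z + y) := by
    have hneg : (∫ x in (-(2 * a))..(2 * a), g (-x)) = ∫ x in (-(2 * a))..(2 * a), g x := by
      have h := intervalIntegral.integral_comp_neg (a := -(2 * a)) (b := 2 * a) g
      simpa [neg_neg] using h
    rw [← hneg, intervalIntegral.integral_of_le (by linarith)]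
    refine setIntegral_congr_fun measurableSet_Ioc fun z _ => ?_
    simp only [hg_def]
    have h : ∀ y : ℝ, p y * q (y - -z) = p y * q (z + y) := by
      intro y; rw [show y - -z = z + y by ring]
    simp only [h]
  have hinner : ∀ x : ℝ, (∫ t in Ioc 0 (2 * π), p (t + x) * q (t - x)) = g (2 * x) := by
    intro x
    have h2 : Function.Periodic (fun y => p y * q (y - 2 * x)) (2 * π) := by
      intro y
      simp only
      rw [hp y, show y + 2 * π - 2 * x = (y - 2 * x) + 2 * π by ring, hq]
    have h1 := intervalIntegral.integral_comp_add_right (a := 0) (b := 2 * π)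
      (fun y => p y * q (y - 2 * x)) x
    have h3 := h2.intervalIntegral_add_eq x 0
    rw [zero_add] at h1 h3
    simp only [hg_def]
    rw [← intervalIntegral.integral_of_le (by positivity : (0:ℝ) ≤ 2 * π)]
    calc (∫ t in (0:ℝ)..(2 * π), p (t + x) * q (t - x))
        = ∫ t in (0:ℝ)..(2 * π), (fun y => p y * q (y - 2 * x)) (t + x) := by
          apply intervalIntegral.integral_congr
          intro t _
          simp only
          rw [show t + x - 2 * x = t - x by ring]
      _ = ∫ y in x..(2 * π + x), p y * q (y - 2 * x) := h1
      _ = ∫ y in x..(x + 2 * π), p y * q (y - 2 * x) := by rw [add_comm (2 * π) x]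
      _ = ∫ y in (0:ℝ)..(2 * π), p y * q (y - 2 * x) := h3
      _ = ∫ y in Ioc 0 (2 * π), p y * q (y - 2 * x) :=
          intervalIntegral.integral_of_le (by positivity)
  have hmain : (∫ z in (Ioc 0 (2 * π)) ×ˢ (Ioo a (π - a)), p (z.1 + z.2) * q (z.1 - z.2))
      = (2:ℝ)⁻¹ * ∫ z in (2 * a)..(2 * π - 2 * a), g z := by
    have hbox' : IntegrableOn (fun w : ℝ × ℝ => p (w.1 + w.2) * q (w.1 - w.2))
        ((Ioc 0 (2 * π)) ×ˢ (Ioo a (π - a)))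
        ((volume : Measure ℝ).prod (volume : Measure ℝ)) := by
      rwa [IntegrableOn, Measure.volume_eq_prod] at hbox
    rw [Measure.volume_eq_prod, setIntegral_prod _ hbox']
    have hunc : Integrable (Function.uncurry fun t x => p (t + x) * q (t - x))
        ((volume.restrict (Ioc 0 (2 * π))).prod (volume.restrict (Ioo a (π - a)))) := by
      rw [Measure.prod_restrict]
      exact hbox'
    have hsw := integral_integral_swap hunc
    rw [hsw]
    simp only [hinner]
    rw [← integral_Ioc_eq_integral_Ioo,
      ← intervalIntegral.integral_of_le (by linarith : a ≤ π - a),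
      intervalIntegral.integral_comp_mul_left g (by norm_num : (2:ℝ) ≠ 0),
      show 2 * (π - a) = 2 * π - 2 * a by ring, smul_eq_mul]
  rw [hmain, hEq1, hG, hH]
  ring
end

section
/- Let v̂ ∈ L²(𝕋) and v(t,x) := v̂(t+x) - v̂(t-x) on Ω := 𝕋 × (0,π). If v̂ has zero average over [0,2π], then ‖v‖²_{L²(Ω)} = 2π ‖v̂‖²_{L²(𝕋)}. -/
open MeasureTheory Real Set


lemma per_intervalIntegrable {f : ℝ → ℝ} {T : ℝ} (hT : 0 < T) (hf : Function.Periodic f T)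
    (h : IntegrableOn f (Ioc 0 T)) (a b : ℝ) : IntervalIntegrable f volume a b := by
  have h0 : IntervalIntegrable f volume 0 T :=
    (intervalIntegrable_iff_integrableOn_Ioc_of_le hT.le).2 h
  have step : ∀ k : ℤ, IntervalIntegrable f volume (k * T) (k * T + T) := by
    intro k
    have h1 := h0.comp_sub_right (k * T)
    have heq : (fun x => f (x - k * T)) = f := funext fun x => hf.sub_int_mul_eq k
    rw [heq] at h1
    simpa [add_comm] using h1
  have chain : ∀ n : ℕ, ∀ k : ℤ, IntervalIntegrable f volume (k * T) (k * T + n * T) := by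
    intro n
    induction n with
    | zero => intro k; simp
    | succ n ih =>
      intro k
      refine (ih k).trans ?_
      have h2 := step (k + n)
      push_cast at h2 ⊢
      ring_nf at h2 ⊢
      exact h2
  obtain ⟨n, hn⟩ := exists_nat_gt ((max |a| |b|) / T)
  have hmax : max |a| |b| < n * T := (div_lt_iff₀ hT).mp hn
  have hbig := chain (2 * n) (-(n : ℤ))
  have key : ∀ x : ℝ, |x| ≤ max |a| |b| →
      x ∈ Set.uIcc (((-(n : ℤ) : ℤ) : ℝ) * T) (((-(n : ℤ) : ℤ) : ℝ) * T + ((2 * n : ℕ) : ℝ) * T) := by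
    intro x hx
    have habs := abs_le.mp (hx.trans hmax.le)
    have e1 : (((-(n : ℤ) : ℤ) : ℝ)) * T = -((n : ℝ) * T) := by push_cast; ring
    have e2 : (((-(n : ℤ) : ℤ) : ℝ)) * T + ((2 * n : ℕ) : ℝ) * T = (n : ℝ) * T := by push_cast; ring
    rw [e2, e1, Set.uIcc_of_le (by nlinarith [mul_nonneg (Nat.cast_nonneg (α := ℝ) n) hT.le] :
      -((n : ℝ) * T) ≤ (n : ℝ) * T)]
    exact ⟨habs.1, habs.2⟩
  exact hbig.mono_set (Set.uIcc_subset_uIcc (key a (le_max_left _ _)) (key b (le_max_right _ _)))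

lemma per_shift_integral {f : ℝ → ℝ} {T : ℝ} (hT : 0 < T) (hf : Function.Periodic f T) (c : ℝ) :
    ∫ s in Ioc 0 T, f (s + c) = ∫ s in Ioc 0 T, f s := by
  rw [← intervalIntegral.integral_of_le hT.le, ← intervalIntegral.integral_of_le hT.le,
    intervalIntegral.integral_comp_add_right]
  have h := hf.intervalIntegral_add_eq c 0
  simpa [zero_add, add_comm] using h

theorem stmt_7 (vh : ℝ → ℝ) (hper : Function.Periodic vh (2 * π)) (hmeas : Measurable vh)
    (hL2 : IntegrableOn (fun s => (vh s) ^ 2) (Ioc 0 (2 * π)))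
    (havg : ∫ s in Ioc 0 (2 * π), vh s = 0) :
    (∫ z in (Ioc 0 (2 * π)) ×ˢ (Ioo 0 π), (vh (z.1 + z.2) - vh (z.1 - z.2)) ^ 2) =
      2 * π * ∫ s in Ioc 0 (2 * π), (vh s) ^ 2 := by
  have hπ : 0 < π := pi_pos
  have hT : 0 < 2 * π := by linarith
  set I := ∫ s in Ioc 0 (2 * π), (vh s) ^ 2 with hI
  have per2 : Function.Periodic (fun s => vh s ^ 2) (2 * π) := fun s => by simp [hper s]
  have II2 : ∀ a b : ℝ, IntervalIntegrable (fun s => vh s ^ 2) volume a b :=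
    per_intervalIntegrable hT per2 hL2
  have hvabs : ∀ x : ℝ, |x| ≤ x ^ 2 + 1 := fun x => by nlinarith [sq_nonneg (|x| - 1), sq_abs x]
  have hvInt : IntegrableOn vh (Ioc 0 (2 * π)) := by
    have hb : IntegrableOn (fun s => vh s ^ 2 + 1) (Ioc 0 (2 * π)) :=
      hL2.add (integrableOn_const measure_Ioc_lt_top.ne)
    exact hb.mono' hmeas.aestronglyMeasurable.restrict
      (Filter.Eventually.of_forall fun s => by simpa [Real.norm_eq_abs] using hvabs (vh s))
  have IIv : ∀ a b : ℝ, IntervalIntegrable vh volume a b := per_intervalIntegrable hT hper hvInt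
  have shift_sq : ∀ c : ℝ, (∫ s in Ioc 0 (2 * π), vh (s + c) ^ 2) = I :=
    fun c => per_shift_integral hT per2 c
  have shift_v : ∀ c : ℝ, (∫ s in Ioc 0 (2 * π), vh (s + c)) = 0 :=
    fun c => (per_shift_integral hT hper c).trans havg
  have intShift : ∀ c : ℝ, IntegrableOn (fun t => vh (t + c) ^ 2) (Ioc 0 (2 * π)) := by
    intro c
    have h1 := (II2 c (2 * π + c)).comp_add_right c
    have h2 : IntervalIntegrable (fun t => vh (t + c) ^ 2) volume 0 (2 * π) := by
      simpa using h1
    exact (intervalIntegrable_iff_integrableOn_Ioc_of_le hT.le).1 h2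
  have habs_mul : ∀ a b : ℝ, |a * b| ≤ a ^ 2 + b ^ 2 := fun a b =>
    abs_le.2 ⟨by nlinarith [sq_nonneg (a + b)], by nlinarith [sq_nonneg (a - b)]⟩
  -- measures
  set μ := volume.restrict (Ioc 0 (2 * π)) with hμ
  set ν := volume.restrict (Ioo 0 π) with hν
  -- measurability
  have m1 : Measurable (fun z : ℝ × ℝ => vh (z.1 + z.2) ^ 2) :=
    (hmeas.comp (measurable_fst.add measurable_snd)).pow_const 2
  have m2 : Measurable (fun z : ℝ × ℝ => vh (z.1 - z.2) ^ 2) :=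
    (hmeas.comp (measurable_fst.sub measurable_snd)).pow_const 2
  have m12 : Measurable (fun z : ℝ × ℝ => vh (z.1 + z.2) * vh (z.1 - z.2)) :=
    (hmeas.comp (measurable_fst.add measurable_snd)).mul
      (hmeas.comp (measurable_fst.sub measurable_snd))
  have mF : Measurable (fun z : ℝ × ℝ => (vh (z.1 + z.2) - vh (z.1 - z.2)) ^ 2) :=
    ((hmeas.comp (measurable_fst.add measurable_snd)).sub
      (hmeas.comp (measurable_fst.sub measurable_snd))).pow_const 2
  -- integrability on μ.prod ν
  have Ia : Integrable (fun z : ℝ × ℝ => vh (z.1 + z.2) ^ 2) (μ.prod ν) := by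
    rw [integrable_prod_iff' m1.aestronglyMeasurable]
    constructor
    · exact Filter.Eventually.of_forall fun y => intShift y
    · have e : ∀ y : ℝ, (∫ x in Ioc 0 (2 * π), ‖vh (x + y) ^ 2‖) = I := fun y => by
        simp only [Real.norm_eq_abs, abs_pow, sq_abs]
        exact shift_sq y
      exact (funext e : _) ▸ integrable_const (μ := ν) I
  have Ib : Integrable (fun z : ℝ × ℝ => vh (z.1 - z.2) ^ 2) (μ.prod ν) := by
    rw [integrable_prod_iff' m2.aestronglyMeasurable]
    constructor
    · refine Filter.Eventually.of_forall fun y => ?_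
      have := intShift (-y)
      simp only [sub_eq_add_neg]; exact this
    · have e : ∀ y : ℝ, (∫ x in Ioc 0 (2 * π), ‖vh (x - y) ^ 2‖) = I := fun y => by
        simp only [Real.norm_eq_abs, abs_pow, sq_abs, sub_eq_add_neg]
        exact shift_sq (-y)
      exact (funext e : _) ▸ integrable_const (μ := ν) I
  have Ic : Integrable (fun z : ℝ × ℝ => vh (z.1 + z.2) * vh (z.1 - z.2)) (μ.prod ν) := by
    refine (Ia.add Ib).mono' m12.aestronglyMeasurable (Filter.Eventually.of_forall fun z => ?_)
    rw [Real.norm_eq_abs]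
    exact habs_mul _ _
  have If : Integrable (fun z : ℝ × ℝ => (vh (z.1 + z.2) - vh (z.1 - z.2)) ^ 2) (μ.prod ν) := by
    refine ((Ia.add Ib).const_mul 2).mono' mF.aestronglyMeasurable
      (Filter.Eventually.of_forall fun z => ?_)
    rw [Real.norm_eq_abs, abs_of_nonneg (sq_nonneg _)]
    simp only [Pi.add_apply]
    nlinarith [sq_nonneg (vh (z.1 + z.2) + vh (z.1 - z.2))]
  -- piece A
  have hA : (∫ z, vh (z.1 + z.2) ^ 2 ∂(μ.prod ν)) = π * I := by
    rw [integral_prod_symm _ Ia]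
    have e1 : (∫ y in Ioo 0 π, ∫ x in Ioc 0 (2 * π), vh (x + y) ^ 2) = ∫ _y in Ioo 0 π, I :=
      integral_congr_ae (Filter.Eventually.of_forall fun y => shift_sq y)
    have e2 : (∫ _y in Ioo 0 π, I) = π * I := by
      simp [Real.volume_Ioo, ENNReal.toReal_ofReal hπ.le, hπ.le]
    exact e1.trans e2
  have hB : (∫ z, vh (z.1 - z.2) ^ 2 ∂(μ.prod ν)) = π * I := by
    rw [integral_prod_symm _ Ib]
    have e1 : (∫ y in Ioo 0 π, ∫ x in Ioc 0 (2 * π), vh (x - y) ^ 2) = ∫ _y in Ioo 0 π, I :=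
      integral_congr_ae (Filter.Eventually.of_forall fun y => by
        simp only [sub_eq_add_neg]; exact shift_sq (-y))
    have e2 : (∫ _y in Ioo 0 π, I) = π * I := by
      simp [Real.volume_Ioo, ENNReal.toReal_ofReal hπ.le, hπ.le]
    exact e1.trans e2
  -- cross term
  have inner_eq : ∀ y : ℝ, (∫ x in Ioc 0 (2 * π), vh (x + y) * vh (x - y))
      = ∫ s in Ioc 0 (2 * π), vh (s + 2 * y) * vh s := by
    intro y
    rw [← intervalIntegral.integral_of_le hT.le, ← intervalIntegral.integral_of_le hT.le]
    have e : (fun x : ℝ => vh (x + y) * vh (x - y))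
        = fun x => (fun s => vh (s + 2 * y) * vh s) (x + -y) := by
      funext x
      simp only []
      rw [show x + -y + 2 * y = x + y by ring, show x + -y = x - y by ring]
    rw [e, intervalIntegral.integral_comp_add_right (fun s => vh (s + 2 * y) * vh s) (-y)]
    have pcr : Function.Periodic (fun s => vh (s + 2 * y) * vh s) (2 * π) := fun s => by
      simp only []
      rw [show s + 2 * π + 2 * y = (s + 2 * y) + 2 * π by ring, hper (s + 2 * y), hper s]
    have hshift := pcr.intervalIntegral_add_eq (-y) 0
    rw [show (0 : ℝ) + -y = -y by ring, show 2 * π + -y = -y + 2 * π by ring, hshift, zero_add]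
  -- integrability of H on ν.prod μ
  have mH : Measurable (fun z : ℝ × ℝ => vh (z.2 + 2 * z.1) * vh z.2) :=
    (hmeas.comp (measurable_snd.add (measurable_fst.const_mul 2))).mul (hmeas.comp measurable_snd)
  have sec : ∀ y : ℝ, Integrable (fun s => vh (s + 2 * y) * vh s) μ := by
    intro y
    refine ((intShift (2 * y)).add hL2).mono'
      (((hmeas.comp (measurable_id.add_const (2 * y))).mul hmeas).aestronglyMeasurable.restrict)
      (Filter.Eventually.of_forall fun s => ?_)
    rw [Real.norm_eq_abs]
    exact habs_mul _ _
  have IH : Integrable (fun z : ℝ × ℝ => vh (z.2 + 2 * z.1) * vh z.2) (ν.prod μ) := by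
    rw [integrable_prod_iff mH.aestronglyMeasurable]
    constructor
    · exact Filter.Eventually.of_forall fun y => sec y
    · refine (integrable_const (2 * I)).mono' mH.aestronglyMeasurable.norm.integral_prod_right'
        (Filter.Eventually.of_forall fun y => ?_)
      have h0 : (0 : ℝ) ≤ ∫ s in Ioc 0 (2 * π), ‖vh (s + 2 * y) * vh s‖ :=
        integral_nonneg fun s => norm_nonneg _
      have h1 : (∫ s in Ioc 0 (2 * π), ‖vh (s + 2 * y) * vh s‖)
          ≤ ∫ s in Ioc 0 (2 * π), (vh (s + 2 * y) ^ 2 + vh s ^ 2) := by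
        refine integral_mono (sec y).norm ((intShift (2 * y)).add hL2) fun s => ?_
        rw [Real.norm_eq_abs]
        exact habs_mul _ _
      have h2 : (∫ s in Ioc 0 (2 * π), (vh (s + 2 * y) ^ 2 + vh s ^ 2)) = I + I := by
        rw [integral_add (intShift (2 * y)) hL2, shift_sq (2 * y)]
      rw [Real.norm_eq_abs, abs_of_nonneg h0]
      calc (∫ s in Ioc 0 (2 * π), ‖vh (s + 2 * y) * vh s‖) ≤ I + I := h2 ▸ h1
        _ = 2 * I := by ring
  have hz : ∀ s : ℝ, (∫ y in Ioo 0 π, vh (s + 2 * y)) = 0 := by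
    intro s
    rw [← MeasureTheory.integral_Ioc_eq_integral_Ioo, ← intervalIntegral.integral_of_le hπ.le]
    have e : (fun y : ℝ => vh (s + 2 * y)) = fun y => (fun u => vh (s + u)) (2 * y) := rfl
    rw [e, intervalIntegral.integral_comp_mul_left (fun u => vh (s + u)) (two_ne_zero)]
    rw [show (2 : ℝ) * 0 = 0 by ring, intervalIntegral.integral_of_le hT.le]
    have e2 : (∫ u in Ioc 0 (2 * π), vh (s + u)) = 0 := by
      have e3 : (∫ u in Ioc 0 (2 * π), vh (s + u)) = ∫ u in Ioc 0 (2 * π), vh (u + s) :=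
        integral_congr_ae (Filter.Eventually.of_forall fun u => congrArg vh (add_comm s u))
      exact e3.trans (shift_v s)
    rw [e2, smul_zero]
  have hC : (∫ z, vh (z.1 + z.2) * vh (z.1 - z.2) ∂(μ.prod ν)) = 0 := by
    rw [integral_prod_symm _ Ic]
    have e1 : (∫ y in Ioo 0 π, ∫ x in Ioc 0 (2 * π), vh (x + y) * vh (x - y))
        = ∫ y in Ioo 0 π, ∫ s in Ioc 0 (2 * π), vh (s + 2 * y) * vh s :=
      integral_congr_ae (Filter.Eventually.of_forall fun y => inner_eq y)
    have e2 : (∫ y in Ioo 0 π, ∫ s in Ioc 0 (2 * π), vh (s + 2 * y) * vh s)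
        = ∫ z, vh (z.2 + 2 * z.1) * vh z.2 ∂(ν.prod μ) := (integral_prod _ IH).symm
    have e3 : (∫ z, vh (z.2 + 2 * z.1) * vh z.2 ∂(ν.prod μ))
        = ∫ s in Ioc 0 (2 * π), ∫ y in Ioo 0 π, vh (s + 2 * y) * vh s := integral_prod_symm _ IH
    have e4 : (∫ s in Ioc 0 (2 * π), ∫ y in Ioo 0 π, vh (s + 2 * y) * vh s) = 0 := by
      have e5 : ∀ s : ℝ, (∫ y in Ioo 0 π, vh (s + 2 * y) * vh s) = 0 := fun s => by
        rw [integral_mul_const, hz s, zero_mul]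
      rw [integral_congr_ae (Filter.Eventually.of_forall fun s => e5 s), integral_zero]
    exact ((e1.trans e2).trans e3).trans e4
  -- assemble
  have hmeasrw : (∫ z in (Ioc 0 (2 * π)) ×ˢ (Ioo 0 π), (vh (z.1 + z.2) - vh (z.1 - z.2)) ^ 2)
      = ∫ z, (vh (z.1 + z.2) - vh (z.1 - z.2)) ^ 2 ∂(μ.prod ν) := by
    rw [hμ, hν, Measure.prod_restrict, ← Measure.volume_eq_prod]
  rw [hmeasrw]
  have expand : (fun z : ℝ × ℝ => (vh (z.1 + z.2) - vh (z.1 - z.2)) ^ 2)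
      = fun z => vh (z.1 + z.2) ^ 2 + vh (z.1 - z.2) ^ 2
        - 2 * (vh (z.1 + z.2) * vh (z.1 - z.2)) := funext fun z => by ring
  have Iab : Integrable (fun z : ℝ × ℝ => vh (z.1 + z.2) ^ 2 + vh (z.1 - z.2) ^ 2) (μ.prod ν) :=
    Ia.add Ib
  have Ic2 : Integrable (fun z : ℝ × ℝ => 2 * (vh (z.1 + z.2) * vh (z.1 - z.2))) (μ.prod ν) :=
    Ic.const_mul 2
  rw [expand, integral_sub Iab Ic2, integral_add Ia Ib,
    MeasureTheory.integral_const_mul, hA, hB, hC]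
  ring
end

section
/- Let v̂ : 𝕋 → ℝ be essentially bounded with zero average and v(t,x) := v̂(t+x) - v̂(t-x) on Ω := 𝕋 × (0,π). Then ‖v̂‖_{L^∞(𝕋)} ≤ ‖v‖_{L^∞(Ω)} ≤ 2‖v̂‖_{L^∞(𝕋)}. -/
open MeasureTheory Real Set
open scoped ENNReal

/-- If a set of reals is invariant under translation by `T` and its intersection with one
period `Ioc 0 T` is null, then the whole set is null. -/
lemma null_of_periodic_set {T : ℝ} (hT : 0 < T) {A : Set ℝ}
    (hA : ∀ s, s + T ∈ A ↔ s ∈ A)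
    (h0 : volume (A ∩ Ioc 0 T) = 0) : volume A = 0 := by
  have hAz : ∀ (n : ℤ) (s : ℝ), s + n * T ∈ A ↔ s ∈ A := by
    intro n
    induction n using Int.induction_on with
    | zero => simp
    | succ k ih =>
      intro s
      have h : s + ((k : ℤ) + 1 : ℤ) * T = (s + (k : ℤ) * T) + T := by push_cast; ring
      rw [h, hA, ih]
    | pred k ih =>
      intro s
      have h1 := hA (s + ((-(k : ℤ) - 1 : ℤ) : ℝ) * T)
      have h : (s + ((-(k : ℤ) - 1 : ℤ) : ℝ) * T) + T = s + ((-(k : ℤ) : ℤ) : ℝ) * T := by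
        push_cast; ring
      rw [h] at h1
      exact h1.symm.trans (ih s)
  have hcover : A ⊆ ⋃ n : ℤ, (fun s => s + n * T) ⁻¹' (A ∩ Ioc 0 T) := by
    intro s hs
    set m : ℤ := toIocDiv hT 0 s with hm
    have hmem : s - m • T ∈ Ioc 0 (0 + T) := sub_toIocDiv_zsmul_mem_Ioc hT 0 s
    rw [zero_add] at hmem
    refine mem_iUnion.2 ⟨-m, ?_⟩
    simp only [mem_preimage, mem_inter_iff]
    have he : s + ((-m : ℤ) : ℝ) * T = s - m • T := by
      rw [zsmul_eq_mul]; push_cast; ring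
    rw [he]
    refine ⟨?_, hmem⟩
    have := hAz (-m) s
    rw [he] at this
    exact this.2 hs
  refine measure_mono_null hcover (measure_iUnion_null fun n => ?_)
  exact (measurePreserving_add_right volume ((n : ℝ) * T)).quasiMeasurePreserving.preimage_null h0

theorem stmt_8 (vh : ℝ → ℝ) (hper : Function.Periodic vh (2 * π)) (hmeas : Measurable vh)
    (hbdd : eLpNorm vh ⊤ (volume.restrict (Ioc 0 (2 * π))) < ⊤)
    (havg : ∫ s in Ioc 0 (2 * π), vh s = 0) :
    eLpNorm vh ⊤ (volume.restrict (Ioc 0 (2 * π))) ≤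
        eLpNorm (fun z : ℝ × ℝ => vh (z.1 + z.2) - vh (z.1 - z.2)) ⊤
          (volume.restrict ((Ioc 0 (2 * π)) ×ˢ (Ioo 0 π))) ∧
      eLpNorm (fun z : ℝ × ℝ => vh (z.1 + z.2) - vh (z.1 - z.2)) ⊤
          (volume.restrict ((Ioc 0 (2 * π)) ×ˢ (Ioo 0 π))) ≤
        2 * eLpNorm vh ⊤ (volume.restrict (Ioc 0 (2 * π))) := by
  have hπ : (0 : ℝ) < π := Real.pi_pos
  have hT : (0 : ℝ) < 2 * π := by positivity
  set M : ℝ≥0∞ := eLpNorm vh ⊤ (volume.restrict (Ioc 0 (2 * π))) with hMdef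
  -- Step A : global a.e. bound on vh
  have hA : ∀ᵐ s : ℝ, (‖vh s‖₊ : ℝ≥0∞) ≤ M := by
    have h0 : ∀ᵐ s ∂(volume.restrict (Ioc 0 (2 * π))), (‖vh s‖₊ : ℝ≥0∞) ≤ M := by
      rw [hMdef, eLpNorm_exponent_top]
      exact ae_le_eLpNormEssSup
    rw [ae_iff] at h0 ⊢
    rw [Measure.restrict_apply' measurableSet_Ioc] at h0
    exact null_of_periodic_set hT (fun s => by simp [hper s]) h0
  have hMne : M ≠ ⊤ := hbdd.ne
  have hAr : ∀ᵐ s : ℝ, |vh s| ≤ M.toReal := by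
    filter_upwards [hA] with s hs
    have := ENNReal.toReal_mono hMne hs
    simpa [Real.norm_eq_abs] using this
  -- interval integrability of vh
  have hInt : ∀ a b : ℝ, IntervalIntegrable vh volume a b := by
    intro a b
    rw [intervalIntegrable_iff]
    refine ⟨(hmeas.aestronglyMeasurable).restrict, ?_⟩
    have : IsFiniteMeasure (volume.restrict (Set.uIoc a b)) := by
      constructor
      rw [Measure.restrict_apply_univ]
      rw [Set.uIoc]
      simp [Real.volume_Ioc]
    exact HasFiniteIntegral.of_bounded (C := M.toReal)
      (ae_restrict_of_ae (hAr.mono fun s hs => by simpa [Real.norm_eq_abs] using hs))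
  -- Part 2 : upper bound
  have part2 : eLpNorm (fun z : ℝ × ℝ => vh (z.1 + z.2) - vh (z.1 - z.2)) ⊤
      (volume.restrict ((Ioc 0 (2 * π)) ×ˢ (Ioo 0 π))) ≤ 2 * M := by
    -- a.e. bound for all of ℝ²
    obtain ⟨N, hN1, hN2, hN3⟩ := exists_measurable_superset_of_null (ae_iff.1 hAr)
    have key : ∀ c : ℝ, (volume : Measure ℝ) ((fun b => c + b) ⁻¹' N) = 0 := by
      intro c
      rw [measure_preimage_add]
      exact hN3
    have key2 : ∀ c : ℝ, (volume : Measure ℝ) ((fun b => c - b) ⁻¹' N) = 0 := by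
      intro c
      exact (Measure.measurePreserving_sub_left volume c).quasiMeasurePreserving.preimage_null hN3
    have hadd : ∀ᵐ z : ℝ × ℝ, z.1 + z.2 ∉ N := by
      rw [ae_iff]
      refine measure_mono_null (fun z hz => ?_) (t := {z : ℝ × ℝ | z.1 + z.2 ∈ N}) ?_
      · simpa using hz
      · rw [MeasureTheory.Measure.volume_eq_prod,
          show {z : ℝ × ℝ | z.1 + z.2 ∈ N} = (fun z : ℝ × ℝ => z.1 + z.2) ⁻¹' N from rfl,
          Measure.prod_apply (show MeasurableSet ((fun z : ℝ × ℝ => z.1 + z.2) ⁻¹' N) from (measurable_fst.add measurable_snd) hN2)]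
        rw [lintegral_congr (fun a => by
          rw [show Prod.mk a ⁻¹' ((fun z : ℝ × ℝ => z.1 + z.2) ⁻¹' N) =
            (fun b => a + b) ⁻¹' N from rfl, key a])]
        simp
    have hsub : ∀ᵐ z : ℝ × ℝ, z.1 - z.2 ∉ N := by
      rw [ae_iff]
      refine measure_mono_null (fun z hz => ?_) (t := {z : ℝ × ℝ | z.1 - z.2 ∈ N}) ?_
      · simpa using hz
      · rw [MeasureTheory.Measure.volume_eq_prod,
          show {z : ℝ × ℝ | z.1 - z.2 ∈ N} = (fun z : ℝ × ℝ => z.1 - z.2) ⁻¹' N from rfl,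
          Measure.prod_apply (show MeasurableSet ((fun z : ℝ × ℝ => z.1 - z.2) ⁻¹' N) from (measurable_fst.sub measurable_snd) hN2)]
        rw [lintegral_congr (fun a => by
          rw [show Prod.mk a ⁻¹' ((fun z : ℝ × ℝ => z.1 - z.2) ⁻¹' N) =
            (fun b => a - b) ⁻¹' N from rfl, key2 a])]
        simp
    have hbound : ∀ᵐ z : ℝ × ℝ,
        ‖vh (z.1 + z.2) - vh (z.1 - z.2)‖ ≤ 2 * M.toReal := by
      filter_upwards [hadd, hsub] with z h1 h2
      have e1 : |vh (z.1 + z.2)| ≤ M.toReal := by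
        by_contra h; exact h1 (hN1 (by simpa using h))
      have e2 : |vh (z.1 - z.2)| ≤ M.toReal := by
        by_contra h; exact h2 (hN1 (by simpa using h))
      calc ‖vh (z.1 + z.2) - vh (z.1 - z.2)‖
          ≤ ‖vh (z.1 + z.2)‖ + ‖vh (z.1 - z.2)‖ := norm_sub_le _ _
        _ ≤ M.toReal + M.toReal := by
            simp only [Real.norm_eq_abs]; exact add_le_add e1 e2
        _ = 2 * M.toReal := by ring
    rw [eLpNorm_exponent_top]
    refine le_trans (eLpNormEssSup_le_of_ae_bound (ae_restrict_of_ae hbound)) ?_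
    rw [ENNReal.ofReal_mul (by norm_num), ENNReal.ofReal_toReal hMne]
    norm_num
  -- Part 1 : lower bound
  have part1 : M ≤ eLpNorm (fun z : ℝ × ℝ => vh (z.1 + z.2) - vh (z.1 - z.2)) ⊤
      (volume.restrict ((Ioc 0 (2 * π)) ×ˢ (Ioo 0 π))) := by
    set Nn : ℝ≥0∞ := eLpNorm (fun z : ℝ × ℝ => vh (z.1 + z.2) - vh (z.1 - z.2)) ⊤
      (volume.restrict ((Ioc 0 (2 * π)) ×ˢ (Ioo 0 π))) with hNndef
    by_cases hNtop : Nn = ⊤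
    · rw [hNtop]; exact le_top
    set r : ℝ := Nn.toReal with hrdef
    -- a.e. bound on the rectangle
    have h0 : ∀ᵐ z ∂(volume.restrict ((Ioc 0 (2 * π)) ×ˢ (Ioo 0 π))),
        |vh (z.1 + z.2) - vh (z.1 - z.2)| ≤ r := by
      have := ae_le_eLpNormEssSup
        (f := fun z : ℝ × ℝ => vh (z.1 + z.2) - vh (z.1 - z.2))
        (μ := volume.restrict ((Ioc 0 (2 * π)) ×ˢ (Ioo 0 π)))
      rw [eLpNorm_exponent_top] at hNndef
      filter_upwards [this] with z hz
      rw [← hNndef] at hz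
      have := ENNReal.toReal_mono hNtop hz
      simpa [Real.norm_eq_abs] using this
    -- bad set on the rectangle is null
    have hB : volume ({z : ℝ × ℝ | ¬ |vh (z.1 + z.2) - vh (z.1 - z.2)| ≤ r}
        ∩ (Ioc 0 (2 * π)) ×ˢ (Ioo 0 π)) = 0 := by
      rw [ae_iff] at h0
      rwa [Measure.restrict_apply' (measurableSet_Ioc.prod measurableSet_Ioo)] at h0
    -- periodize in the first coordinate
    set B : Set (ℝ × ℝ) := {z : ℝ × ℝ | ¬ |vh (z.1 + z.2) - vh (z.1 - z.2)| ≤ r} with hBdef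
    have hBper : ∀ (n : ℤ) (z : ℝ × ℝ), (z.1 + (n : ℝ) * (2 * π), z.2) ∈ B ↔ z ∈ B := by
      intro n z
      have e1 : vh (z.1 + (n : ℝ) * (2 * π) + z.2) = vh (z.1 + z.2) := by
        have := (hper.int_mul n) (z.1 + z.2)
        rw [← this]; ring_nf
      have e2 : vh (z.1 + (n : ℝ) * (2 * π) - z.2) = vh (z.1 - z.2) := by
        have := (hper.int_mul n) (z.1 - z.2)
        rw [← this]; ring_nf
      simp only [hBdef, mem_setOf_eq, e1, e2]
    have hBstrip : volume (B ∩ (univ ×ˢ Ioo 0 π)) = 0 := by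
      have hcover : B ∩ (univ ×ˢ Ioo 0 π) ⊆
          ⋃ n : ℤ, (fun z : ℝ × ℝ => (z.1 + (n : ℝ) * (2 * π), z.2)) ⁻¹'
            (B ∩ (Ioc 0 (2 * π)) ×ˢ (Ioo 0 π)) := by
        rintro z ⟨hzB, hzx⟩
        set m : ℤ := toIocDiv hT 0 z.1 with hm
        have hmem : z.1 - m • (2 * π) ∈ Ioc 0 (0 + 2 * π) := sub_toIocDiv_zsmul_mem_Ioc hT 0 z.1
        rw [zero_add] at hmem
        refine mem_iUnion.2 ⟨-m, ?_⟩
        simp only [mem_preimage, mem_inter_iff]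
        have he : z.1 + ((-m : ℤ) : ℝ) * (2 * π) = z.1 - m • (2 * π) := by
          rw [zsmul_eq_mul]; push_cast; ring
        constructor
        · exact (hBper (-m) z).2 hzB
        · constructor
          · rw [he]; exact hmem
          · exact hzx.2
      refine measure_mono_null hcover (measure_iUnion_null fun n => ?_)
      have hmp : MeasurePreserving
          (fun z : ℝ × ℝ => (z.1 + (n : ℝ) * (2 * π), z.2))
          (volume.prod volume) (volume.prod volume) :=
        (measurePreserving_add_right volume ((n : ℝ) * (2 * π))).prod (MeasurePreserving.id _)
      rw [MeasureTheory.Measure.volume_eq_prod] at hB ⊢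
      exact hmp.quasiMeasurePreserving.preimage_null hB
    -- shear : pull back along (s,x) ↦ (s - x, x)
    have hshear : volume ((fun z : ℝ × ℝ => (z.1 - z.2, z.2)) ⁻¹'
        (B ∩ (univ ×ˢ Ioo 0 π))) = 0 := by
      rw [MeasureTheory.Measure.volume_eq_prod] at hBstrip ⊢
      exact (measurePreserving_sub_prod volume volume).quasiMeasurePreserving.preimage_null
        hBstrip
    have hae2 : ∀ᵐ z : ℝ × ℝ, z.2 ∈ Ioo 0 π → |vh z.1 - vh (z.1 - 2 * z.2)| ≤ r := by
      rw [ae_iff]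
      refine measure_mono_null (fun z hz => ?_) hshear
      simp only [mem_setOf_eq, not_forall] at hz
      obtain ⟨hx, hv⟩ := hz
      simp only [mem_preimage, mem_inter_iff, hBdef, mem_setOf_eq]
      constructor
      · have e1 : z.1 - z.2 + z.2 = z.1 := by ring
        have e2 : z.1 - z.2 - z.2 = z.1 - 2 * z.2 := by ring
        rw [e1, e2]; exact hv
      · exact ⟨mem_univ _, hx⟩
    rw [MeasureTheory.Measure.volume_eq_prod] at hae2
    have hae3 := Measure.ae_ae_of_ae_prod hae2
    -- for a.e. s, deduce |vh s| ≤ r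
    have hfinal : ∀ᵐ s : ℝ, |vh s| ≤ r := by
      filter_upwards [hae3] with s hs
      -- hs : ∀ᵐ x, x ∈ Ioo 0 π → |vh s - vh (s - 2*x)| ≤ r
      -- integral computation
      have hsub1 : (∫ x in (0:ℝ)..π, vh (s - 2 * x)) = 0 := by
        have c1 : (∫ x in (0:ℝ)..π, vh (s - 2 * x))
            = (2:ℝ)⁻¹ • ∫ y in (0:ℝ)..(2 * π), vh (s - y) := by
          have := intervalIntegral.integral_comp_mul_left (a := (0:ℝ)) (b := π)
            (f := fun y => vh (s - y)) (c := (2:ℝ)) (by norm_num)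
          simpa using this
        have c2 : (∫ y in (0:ℝ)..(2 * π), vh (s - y)) = ∫ u in (s - 2 * π)..s, vh u := by
          have := intervalIntegral.integral_comp_sub_left (a := (0:ℝ)) (b := 2 * π)
            (f := vh) s
          simpa using this
        have c3 : (∫ u in (s - 2 * π)..s, vh u) = ∫ u in (0:ℝ)..(2 * π), vh u := by
          have := hper.intervalIntegral_add_eq (s - 2 * π) 0
          simpa [sub_add_cancel] using this
        have c4 : (∫ u in (0:ℝ)..(2 * π), vh u) = 0 := by
          rw [intervalIntegral.integral_of_le hT.le]
          exact havg
        rw [c1, c2, c3, c4, smul_zero]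
      -- integrability of x ↦ vh (s - 2x) on [0, π]
      have hint2 : IntervalIntegrable (fun x => vh (s - 2 * x)) volume 0 π := by
        have h1 : IntervalIntegrable (fun y => vh (s - y)) volume 0 (2 * π) := by
          have h0' := (hInt s (s - 2 * π)).comp_sub_left s
          have e1 : s - s = 0 := by ring
          have e2 : s - (s - 2 * π) = 2 * π := by ring
          rwa [e1, e2] at h0'
        have h2 := h1.comp_mul_left (c := 2)
        have e1 : (0:ℝ) / 2 = 0 := by norm_num
        have e2 : (2 * π) / 2 = π := by ring
        rwa [e1, e2] at h2
      have hIoo0 : IntegrableOn (fun x => vh (s - 2 * x)) (Ioo 0 π) volume := by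
        have := (intervalIntegrable_iff_integrableOn_Ioc_of_le hπ.le).1 hint2
        exact this.mono_set Ioo_subset_Ioc_self
      have hg : IntegrableOn (fun x => vh s - vh (s - 2 * x)) (Ioo 0 π) volume :=
        (integrableOn_const (by simp [Real.volume_Ioo])).sub
          hIoo0
      -- the integral identity
      have hval : (∫ x in Ioo 0 π, (vh s - vh (s - 2 * x))) = π * vh s := by
        rw [integral_sub (show IntegrableOn (fun _ : ℝ => vh s) (Ioo 0 π) volume from integrableOn_const
          (by simp [Real.volume_Ioo])) hIoo0]
        rw [setIntegral_const]
        have : (∫ x in Ioo 0 π, vh (s - 2 * x)) = 0 := by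
          rw [← integral_Ioc_eq_integral_Ioo, ← intervalIntegral.integral_of_le hπ.le]
          exact hsub1
        rw [this, sub_zero, Real.volume_real_Ioo_of_le hπ.le, sub_zero,
          smul_eq_mul]
      -- the bound
      have hbnd : |∫ x in Ioo 0 π, (vh s - vh (s - 2 * x))| ≤ r * π := by
        have h1 : ‖∫ x in Ioo 0 π, (vh s - vh (s - 2 * x))‖
            ≤ ∫ x in Ioo 0 π, ‖vh s - vh (s - 2 * x)‖ := norm_integral_le_integral_norm _
        have h2 : (∫ x in Ioo 0 π, ‖vh s - vh (s - 2 * x)‖) ≤ ∫ _ in Ioo 0 π, r := by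
          refine integral_mono_ae hg.norm (integrableOn_const
            (by simp [Real.volume_Ioo])) ?_
          filter_upwards [ae_restrict_of_ae hs, ae_restrict_mem measurableSet_Ioo] with x hx hx2
          simpa [Real.norm_eq_abs] using hx hx2
        have h3 : (∫ _ in Ioo 0 π, r : ℝ) = r * π := by
          rw [setIntegral_const, Real.volume_real_Ioo_of_le hπ.le, sub_zero,
            smul_eq_mul, mul_comm]
        calc |∫ x in Ioo 0 π, (vh s - vh (s - 2 * x))|
            ≤ ∫ x in Ioo 0 π, ‖vh s - vh (s - 2 * x)‖ := by
              rw [← Real.norm_eq_abs]; exact h1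
          _ ≤ ∫ _ in Ioo 0 π, r := h2
          _ = r * π := h3
      rw [hval] at hbnd
      have : π * |vh s| ≤ r * π := by
        rwa [abs_mul, abs_of_pos hπ] at hbnd
      nlinarith
    -- conclude
    rw [hMdef, eLpNorm_exponent_top]
    refine le_trans (eLpNormEssSup_le_of_ae_bound (C := r)
      (ae_restrict_of_ae (hfinal.mono fun s hs => by simpa [Real.norm_eq_abs] using hs))) ?_
    rw [hrdef, ENNReal.ofReal_toReal hNtop]
  exact ⟨part1, part2⟩
end

section
/- Let φ₁, …, φ_{2k+1} be functions on Ω := 𝕋 × (0,π) of the form φ_j(t,x) = φ̂_j(t+x) - φ̂_j(t-x) with φ̂_j 2π-periodic, and assume the product φ₁⋯φ_{2k+1} is integrable on Ω_α for 0 ≤ α < 1/2. Then ∫_{Ω_α} φ₁⋯φ_{2k+1} = 0. -/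
open MeasureTheory Real Set

theorem stmt_11 (k : ℕ) (φh : Fin (2 * k + 1) → ℝ → ℝ) (α : ℝ)
    (hα0 : 0 ≤ α) (hα1 : α < 1/2)
    (hper : ∀ j, Function.Periodic (φh j) (2 * π))
    (hmeas : ∀ j, Measurable (φh j))
    (hint : IntegrableOn
      (fun z : ℝ × ℝ => ∏ j : Fin (2 * k + 1), (φh j (z.1 + z.2) - φh j (z.1 - z.2)))
      ((Ioc 0 (2 * π)) ×ˢ (Ioo (α * π) (π - α * π)))) :
    (∫ z in (Ioc 0 (2 * π)) ×ˢ (Ioo (α * π) (π - α * π)),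
      ∏ j : Fin (2 * k + 1), (φh j (z.1 + z.2) - φh j (z.1 - z.2))) = 0 := by
  have hπ : (0:ℝ) < π := pi_pos
  set a : ℝ := α * π with ha
  set b : ℝ := π - α * π with hb
  have hab : a ≤ b := by
    rw [ha, hb]; nlinarith
  set g : ℝ → ℝ → ℝ :=
    fun t x => ∏ j : Fin (2 * k + 1), (φh j (t + x) - φh j (t - x)) with hg
  -- the key pointwise symmetry
  have key : ∀ t x : ℝ, g (t + π) (π - x) = - g t x := by
    intro t x
    have h1 : ∀ j : Fin (2 * k + 1),
        φh j (t + π + (π - x)) - φh j (t + π - (π - x))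
          = -(φh j (t + x) - φh j (t - x)) := by
      intro j
      have e1 : t + π + (π - x) = (t - x) + 2 * π := by ring
      have e2 : t + π - (π - x) = t + x := by ring
      rw [e1, e2, hper j]
      ring
    simp only [hg]
    rw [Finset.prod_congr rfl fun j _ => h1 j]
    have : ∀ f : Fin (2 * k + 1) → ℝ,
        ∏ j, (-(f j)) = - ∏ j, f j := by
      intro f
      have : ∏ j : Fin (2 * k + 1), (-(f j))
          = (∏ _j : Fin (2 * k + 1), (-1 : ℝ)) * ∏ j, f j := by
        rw [← Finset.prod_mul_distrib]; simp
      rw [this, Finset.prod_const, Finset.card_univ, Fintype.card_fin,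
        Odd.neg_one_pow ⟨k, by ring⟩, neg_one_mul]
    exact this _
  -- g is periodic in t
  have gper : ∀ t x : ℝ, g (t + 2 * π) x = g t x := by
    intro t x
    simp only [hg]
    refine Finset.prod_congr rfl fun j _ => ?_
    have e1 : t + 2 * π + x = (t + x) + 2 * π := by ring
    have e2 : t + 2 * π - x = (t - x) + 2 * π := by ring
    rw [e1, e2, hper j, hper j]
  set H : ℝ → ℝ := fun t => ∫ x in Ioo a b, g t x with hH
  -- Step 1: Fubini
  have step1 : (∫ z in (Ioc 0 (2 * π)) ×ˢ (Ioo a b),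
      ∏ j : Fin (2 * k + 1), (φh j (z.1 + z.2) - φh j (z.1 - z.2)))
      = ∫ t in Ioc 0 (2 * π), H t := by
    have := MeasureTheory.setIntegral_prod
      (μ := (volume : Measure ℝ)) (ν := (volume : Measure ℝ))
      (f := fun z : ℝ × ℝ => ∏ j : Fin (2 * k + 1),
        (φh j (z.1 + z.2) - φh j (z.1 - z.2)))
      (s := Ioc 0 (2 * π)) (t := Ioo a b)
      (by rw [← Measure.volume_eq_prod ℝ ℝ]; exact hint)
    rw [show ((volume : Measure (ℝ × ℝ))) = (volume : Measure ℝ).prod volume from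
      Measure.volume_eq_prod ℝ ℝ, this]
  -- Step 2: reflection in x
  have step2 : ∀ s : ℝ, (∫ x in Ioo a b, g s (π - x)) = H s := by
    intro s
    show (∫ x in Ioo a b, g s (π - x)) = ∫ x in Ioo a b, g s x
    rw [← integral_Ioc_eq_integral_Ioo, ← integral_Ioc_eq_integral_Ioo,
      ← intervalIntegral.integral_of_le hab, ← intervalIntegral.integral_of_le hab]
    have := intervalIntegral.integral_comp_sub_left (a := a) (b := b)
      (fun x => g s x) π
    rw [this]
    have e1 : π - b = a := by rw [ha, hb]; ring
    have e2 : π - a = b := by rw [ha, hb]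
    rw [e1, e2]
  -- H flips sign under t ↦ t + π
  have Hflip : ∀ t : ℝ, H (t + π) = - H t := by
    intro t
    have : H (t + π) = ∫ x in Ioo a b, g (t + π) (π - x) := (step2 (t + π)).symm
    rw [this]
    have : (fun x => g (t + π) (π - x)) = fun x => - g t x := by
      funext x; exact key t x
    rw [this, integral_neg]
  -- H is periodic
  have Hper : Function.Periodic H (2 * π) := by
    intro t
    simp only [hH]
    exact integral_congr_ae (Filter.Eventually.of_forall fun x => gper t x)
  -- shift invariance of the t-integral
  have shift : (∫ t in Ioc 0 (2 * π), H (t + π)) = ∫ t in Ioc 0 (2 * π), H t := by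
    have h0 : (0:ℝ) ≤ 2 * π := by linarith
    rw [← intervalIntegral.integral_of_le h0, ← intervalIntegral.integral_of_le h0]
    rw [intervalIntegral.integral_comp_add_right (fun t => H t) π]
    have : (0:ℝ) + π = π := by ring
    have e3 : (2:ℝ) * π + π = π + 2 * π := by ring
    rw [this, e3]
    have := Hper.intervalIntegral_add_eq π 0
    simpa using this
  have neg : (∫ t in Ioc 0 (2 * π), H (t + π)) = - ∫ t in Ioc 0 (2 * π), H t := by
    have : (fun t => H (t + π)) = fun t => - H t := by funext t; exact Hflip t
    rw [this, integral_neg]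
  have hI : (∫ t in Ioc 0 (2 * π), H t) = 0 := by
    have := shift.symm.trans neg
    linarith
  rw [step1, hI]
end

section
/- Let a : (0,π) × ℝ → ℝ be continuous with a(x,-u) = a(x,u) and a(π-x,u) = a(x,u) for all x, u. Let v, φ be functions on Ω := 𝕋 × (0,π) of the form v(t,x) = v̂(t+x) - v̂(t-x), φ(t,x) = φ̂(t+x) - φ̂(t-x) with v̂ ∈ L^∞(𝕋), φ̂ ∈ L¹(𝕋) both 2π-periodic. Then ∫_Ω a(x, v(t,x)) φ(t,x) dt dx = 0. -/
open MeasureTheory Real Set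

private noncomputable def tau12 (t : ℝ) : ℝ :=
  if t ∈ Ioc 0 π then t + π else if t ∈ Ioc π (2 * π) then t - π else t

private noncomputable def rho12 (x : ℝ) : ℝ := π - x

private noncomputable def T12 : ℝ × ℝ → ℝ × ℝ := Prod.map tau12 rho12

private lemma tau12_invol : Function.Involutive tau12 := by
  intro t
  have hπ := pi_pos
  unfold tau12
  by_cases h1 : t ∈ Ioc 0 π
  · have h1' := h1
    simp only [mem_Ioc] at h1'
    have : ¬ (t + π ∈ Ioc 0 π) := by simp only [mem_Ioc]; push_neg; intro; linarith
    have h2 : t + π ∈ Ioc π (2 * π) := by simp only [mem_Ioc]; constructor <;> linarith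
    simp [h1, this, h2]
  · by_cases h2 : t ∈ Ioc π (2 * π)
    · have h2' := h2
      simp only [mem_Ioc] at h2'
      have h3 : t - π ∈ Ioc 0 π := by simp only [mem_Ioc]; constructor <;> linarith
      simp [h1, h2, h3]
    · simp [h1, h2]

private lemma tau12_meas : Measurable tau12 := by
  unfold tau12
  exact Measurable.ite measurableSet_Ioc (measurable_id.add_const π)
    (Measurable.ite measurableSet_Ioc (measurable_id.sub_const π) measurable_id)

private lemma rho12_invol : Function.Involutive rho12 := by
  intro x; unfold rho12; ring

private lemma rho12_meas : Measurable rho12 := measurable_const.sub measurable_id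

private lemma T12_invol : Function.Involutive T12 := by
  intro z
  simp only [T12, Prod.map, tau12_invol z.1, rho12_invol z.2]

private noncomputable def E12 : (ℝ × ℝ) ≃ᵐ (ℝ × ℝ) where
  toFun := T12
  invFun := T12
  left_inv := T12_invol
  right_inv := T12_invol
  measurable_toFun := (tau12_meas.comp measurable_fst).prodMk (rho12_meas.comp measurable_snd)
  measurable_invFun := (tau12_meas.comp measurable_fst).prodMk (rho12_meas.comp measurable_snd)

private lemma tau12_mp :
    MeasurePreserving tau12 (volume.restrict (Ioc 0 (2 * π)))
      (volume.restrict (Ioc 0 (2 * π))) := by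
  have hπ := pi_pos
  constructor
  · exact tau12_meas
  · have hsplit : Ioc (0:ℝ) (2 * π) = Ioc 0 π ∪ Ioc π (2 * π) := by
      rw [Set.Ioc_union_Ioc_eq_Ioc] <;> linarith
    have hdisj : Disjoint (Ioc (0:ℝ) π) (Ioc π (2 * π)) := by
      apply Set.disjoint_left.mpr
      intro t h1 h2
      simp only [mem_Ioc] at h1 h2
      linarith
    have hres : volume.restrict (Ioc (0:ℝ) (2 * π)) =
        volume.restrict (Ioc 0 π) + volume.restrict (Ioc π (2 * π)) := by
      rw [hsplit, Measure.restrict_union hdisj measurableSet_Ioc]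
    have h1 : Measure.map tau12 (volume.restrict (Ioc (0:ℝ) π)) =
        volume.restrict (Ioc π (2 * π)) := by
      have hae : tau12 =ᵐ[volume.restrict (Ioc (0:ℝ) π)] (· + π) := by
        refine (ae_restrict_iff' measurableSet_Ioc).mpr (ae_of_all _ ?_)
        intro t ht; simp [tau12, ht]
      rw [Measure.map_congr hae]
      have hpre : (· + π) ⁻¹' (Ioc π (2 * π)) = Ioc (0:ℝ) π := by
        ext t; simp only [mem_preimage, mem_Ioc]; constructor <;> intro h <;>
          constructor <;> linarith [h.1, h.2]
      have := (measurePreserving_add_right (volume : Measure ℝ) π).restrict_preimage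
        (s := Ioc π (2 * π)) measurableSet_Ioc
      rw [hpre] at this
      exact this.map_eq
    have h2 : Measure.map tau12 (volume.restrict (Ioc π (2 * π))) =
        volume.restrict (Ioc (0:ℝ) π) := by
      have hae : tau12 =ᵐ[volume.restrict (Ioc π (2 * π))] (· - π) := by
        refine (ae_restrict_iff' measurableSet_Ioc).mpr (ae_of_all _ ?_)
        intro t ht
        have ht' := ht
        simp only [mem_Ioc] at ht'
        have : ¬ t ∈ Ioc (0:ℝ) π := by simp only [mem_Ioc]; push_neg; intro; linarith
        simp [tau12, this, ht]
      rw [Measure.map_congr hae]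
      have hpre : (· - π) ⁻¹' (Ioc (0:ℝ) π) = Ioc π (2 * π) := by
        ext t; simp only [mem_preimage, mem_Ioc]; constructor <;> intro h <;>
          constructor <;> linarith [h.1, h.2]
      have := (measurePreserving_sub_right (volume : Measure ℝ) π).restrict_preimage
        (s := Ioc (0:ℝ) π) measurableSet_Ioc
      rw [hpre] at this
      exact this.map_eq
    rw [hres, Measure.map_add _ _ tau12_meas, h1, h2, add_comm]

private lemma rho12_mp :
    MeasurePreserving rho12 (volume.restrict (Ioo 0 π)) (volume.restrict (Ioo 0 π)) := by
  have hpre : rho12 ⁻¹' (Ioo 0 π) = Ioo (0:ℝ) π := by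
    ext x; simp only [rho12, mem_preimage, mem_Ioo]; constructor <;> intro h <;>
      constructor <;> linarith [h.1, h.2]
  have := (Measure.measurePreserving_sub_left (volume : Measure ℝ) π).restrict_preimage
    (s := Ioo (0:ℝ) π) measurableSet_Ioo
  rw [show (fun t => π - t) = rho12 from rfl, hpre] at this
  exact this

theorem stmt_12 (a : ℝ → ℝ → ℝ)
    (hac : ContinuousOn (fun q : ℝ × ℝ => a q.1 q.2) ((Ioo 0 π) ×ˢ (univ : Set ℝ)))
    (haeven : ∀ x u, a x (-u) = a x u)
    (hasym : ∀ x u, a (π - x) u = a x u)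
    (vh φh : ℝ → ℝ)
    (hvper : Function.Periodic vh (2 * π)) (hφper : Function.Periodic φh (2 * π))
    (hvm : Measurable vh) (hφm : Measurable φh)
    (hvbdd : eLpNorm vh ⊤ (volume.restrict (Ioc 0 (2 * π))) < ⊤)
    (hφint : IntegrableOn φh (Ioc 0 (2 * π))) :
    (∫ z in (Ioc 0 (2 * π)) ×ˢ (Ioo 0 π),
      a z.2 (vh (z.1 + z.2) - vh (z.1 - z.2)) * (φh (z.1 + z.2) - φh (z.1 - z.2))) = 0 := by
  have hπ := pi_pos
  set F : ℝ × ℝ → ℝ := fun z =>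
    a z.2 (vh (z.1 + z.2) - vh (z.1 - z.2)) * (φh (z.1 + z.2) - φh (z.1 - z.2)) with hF
  set μ : Measure (ℝ × ℝ) := volume.restrict ((Ioc 0 (2 * π)) ×ˢ (Ioo 0 π)) with hμ
  have hμprod : μ = (volume.restrict (Ioc 0 (2 * π))).prod (volume.restrict (Ioo 0 π)) := by
    rw [hμ, Measure.volume_eq_prod, Measure.prod_restrict]
  have hTmp : MeasurePreserving T12 μ μ := by
    rw [hμprod]
    exact tau12_mp.prod rho12_mp
  have hEmp : MeasurePreserving (E12 : (ℝ × ℝ) ≃ᵐ (ℝ × ℝ)) μ μ := hTmp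
  have hcomp : ∫ z, F (E12 z) ∂μ = ∫ z, F z ∂μ :=
    MeasurePreserving.integral_comp' hEmp F
  have hneg : ∀ z ∈ (Ioc (0:ℝ) (2 * π)) ×ˢ (Ioo (0:ℝ) π), F (T12 z) = - F z := by
    rintro ⟨t, x⟩ hz
    simp only [Set.mem_prod, mem_Ioc, mem_Ioo] at hz
    obtain ⟨⟨ht0, ht2⟩, hx0, hxπ⟩ := hz
    have key : ∀ s : ℝ, (tau12 t + rho12 x = s - x + 2 * π ∨ tau12 t + rho12 x = s - x) ∧
        (tau12 t - rho12 x = s + x - 2 * π ∨ tau12 t - rho12 x = s + x) → True := fun _ _ => trivial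
    have hv1 : vh (tau12 t + rho12 x) = vh (t - x) := by
      by_cases h1 : t ∈ Ioc 0 π
      · have : tau12 t + rho12 x = (t - x) + 2 * π := by simp [tau12, rho12, h1]; try ring
        rw [this, hvper (t - x)]
      · have h2 : t ∈ Ioc π (2 * π) := by
          simp only [mem_Ioc] at h1 ⊢
          push_neg at h1
          exact ⟨h1 ht0, ht2⟩
        have : tau12 t + rho12 x = t - x := by simp [tau12, rho12, h1, h2]; try ring
        rw [this]
    have hv2 : vh (tau12 t - rho12 x) = vh (t + x) := by
      by_cases h1 : t ∈ Ioc 0 π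
      · have : tau12 t - rho12 x = t + x := by simp [tau12, rho12, h1]; try ring
        rw [this]
      · have h2 : t ∈ Ioc π (2 * π) := by
          simp only [mem_Ioc] at h1 ⊢
          push_neg at h1
          exact ⟨h1 ht0, ht2⟩
        have : tau12 t - rho12 x = (t + x) - 2 * π := by simp [tau12, rho12, h1, h2]; try ring
        rw [this, ← hvper (t + x - 2 * π)]
        ring_nf
    have hφ1 : φh (tau12 t + rho12 x) = φh (t - x) := by
      by_cases h1 : t ∈ Ioc 0 π
      · have : tau12 t + rho12 x = (t - x) + 2 * π := by simp [tau12, rho12, h1]; try ring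
        rw [this, hφper (t - x)]
      · have h2 : t ∈ Ioc π (2 * π) := by
          simp only [mem_Ioc] at h1 ⊢
          push_neg at h1
          exact ⟨h1 ht0, ht2⟩
        have : tau12 t + rho12 x = t - x := by simp [tau12, rho12, h1, h2]; try ring
        rw [this]
    have hφ2 : φh (tau12 t - rho12 x) = φh (t + x) := by
      by_cases h1 : t ∈ Ioc 0 π
      · have : tau12 t - rho12 x = t + x := by simp [tau12, rho12, h1]; try ring
        rw [this]
      · have h2 : t ∈ Ioc π (2 * π) := by
          simp only [mem_Ioc] at h1 ⊢
          push_neg at h1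
          exact ⟨h1 ht0, ht2⟩
        have : tau12 t - rho12 x = (t + x) - 2 * π := by simp [tau12, rho12, h1, h2]; try ring
        rw [this, ← hφper (t + x - 2 * π)]
        ring_nf
    show F (tau12 t, rho12 x) = - F (t, x)
    simp only [hF]
    rw [hv1, hv2, hφ1, hφ2]
    have ha : a (rho12 x) (vh (t - x) - vh (t + x)) = a x (vh (t + x) - vh (t - x)) := by
      rw [show vh (t - x) - vh (t + x) = -(vh (t + x) - vh (t - x)) by ring]
      rw [show (rho12 x) = π - x from rfl, hasym, haeven]
    rw [ha]; ring
  have haeq : (fun z => F (E12 z)) =ᵐ[μ] fun z => - F z := by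
    rw [hμ]
    refine (ae_restrict_iff' (measurableSet_Ioc.prod measurableSet_Ioo)).mpr (ae_of_all _ ?_)
    intro z hz
    exact hneg z hz
  have : ∫ z, F z ∂μ = - ∫ z, F z ∂μ := by
    calc ∫ z, F z ∂μ = ∫ z, F (E12 z) ∂μ := hcomp.symm
    _ = ∫ z, - F z ∂μ := integral_congr_ae haeq
    _ = - ∫ z, F z ∂μ := integral_neg F
  have hz : ∫ z, F z ∂μ = 0 := by linarith
  exact hz
end

section
/- Let v̂ ∈ L²(𝕋) be 2π-periodic with zero average, v(t,x) := v̂(t+x) - v̂(t-x), and 0 ≤ α ≤ 1/8. Then ∫_{Ω_α} v² ≥ 2π(1 - 4α) ∫₀^{2π} v̂² ≥ π ∫₀^{2π} v̂², where Ω_α := 𝕋 × (απ, π-απ). -/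
open MeasureTheory Real Set intervalIntegral Function

lemma per_ii {f : ℝ → ℝ} {T : ℝ} (hT : 0 < T) (hf : Periodic f T)
    (h : IntervalIntegrable f volume 0 T) (a b : ℝ) : IntervalIntegrable f volume a b := by
  have hk : ∀ k : ℤ, IntervalIntegrable f volume (k * T) (k * T + T) := by
    intro k
    have h2 := h.comp_add_right (-k * T)
    have : (fun x => f (x + -k * T)) = f := by
      funext x
      simpa using (hf.int_mul (-k)) x
    rw [this] at h2
    have e1 : (0 : ℝ) - -k * T = k * T := by ring
    have e2 : T - -k * T = k * T + T := by ring
    rwa [e1, e2] at h2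
  have hn : ∀ n : ℕ, IntervalIntegrable f volume (-(n * T)) (n * T) := by
    intro n
    induction n with
    | zero => simp
    | succ n ih =>
      have l1 : IntervalIntegrable f volume (-((n+1 : ℕ) * T)) (-(n * T)) := by
        have h3 := hk (-(n+1))
        have e1 : ((-(n+1) : ℤ) : ℝ) * T = -((n+1 : ℕ) * T) := by push_cast; ring
        have e2 : ((-(n+1) : ℤ) : ℝ) * T + T = -((n : ℕ) * T) := by push_cast; ring
        rw [e2] at h3; rw [e1] at h3; exact h3
      have l2 : IntervalIntegrable f volume (n * T) ((n+1 : ℕ) * T) := by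
        have h3 := hk n
        have e2 : ((n : ℤ) : ℝ) * T + T = ((n+1 : ℕ) : ℝ) * T := by push_cast; ring
        rw [e2] at h3
        simpa using h3
      exact (l1.trans ih).trans l2
  obtain ⟨n, hnn⟩ := exists_nat_ge ((max |a| |b|) / T)
  have hmax : max |a| |b| ≤ n * T := by rwa [div_le_iff₀ hT] at hnn
  refine (hn n).mono_set ?_
  have haa : |a| ≤ n * T := le_trans (le_max_left _ _) hmax
  have hbb : |b| ≤ n * T := le_trans (le_max_right _ _) hmax
  have hle : -((n:ℝ) * T) ≤ (n:ℝ) * T := by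
    have : (0:ℝ) ≤ n * T := by positivity
    linarith
  rw [Set.uIcc_of_le hle]
  exact Set.uIcc_subset_Icc (abs_le.mp haa) (abs_le.mp hbb)

lemma mul_io {F G : ℝ → ℝ} (hF : Measurable F) (hG : Measurable G) {s : Set ℝ}
    (h1 : IntegrableOn (fun t => F t ^ 2) s) (h2 : IntegrableOn (fun t => G t ^ 2) s) :
    IntegrableOn (fun t => F t * G t) s := by
  refine Integrable.mono' ((h1.add h2).div_const 2) ((hF.mul hG).aestronglyMeasurable) ?_
  filter_upwards with t
  rw [Real.norm_eq_abs, abs_le]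
  simp only [Pi.add_apply]
  constructor <;> nlinarith [sq_nonneg (F t + G t), sq_nonneg (F t - G t)]

lemma bdd_ii {f : ℝ → ℝ} (hm : AEStronglyMeasurable f volume) {M : ℝ}
    (hb : ∀ x, |f x| ≤ M) (a b : ℝ) : IntervalIntegrable f volume a b := by
  constructor <;>
  · refine Integrable.mono' (integrable_const M) (hm.restrict) ?_
    filter_upwards with t
    exact (Real.norm_eq_abs _) ▸ hb t

set_option maxHeartbeats 2000000 in
theorem stmt_14 (vh : ℝ → ℝ) (α : ℝ) (hα0 : 0 ≤ α) (hα1 : α ≤ 1/8)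
    (hper : Function.Periodic vh (2 * π)) (hmeas : Measurable vh)
    (hint : IntegrableOn (fun s => (vh s) ^ 2) (Ioc 0 (2 * π)))
    (havg : ∫ s in Ioc 0 (2 * π), vh s = 0) :
    (∫ z in (Ioc 0 (2 * π)) ×ˢ (Ioo (α * π) (π - α * π)),
        (vh (z.1 + z.2) - vh (z.1 - z.2)) ^ 2) ≥
        2 * π * (1 - 4 * α) * ∫ s in Ioc 0 (2 * π), (vh s) ^ 2 ∧
      2 * π * (1 - 4 * α) * (∫ s in Ioc 0 (2 * π), (vh s) ^ 2) ≥
        π * ∫ s in Ioc 0 (2 * π), (vh s) ^ 2 := by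
  have hπ := Real.pi_pos
  have h2π : (0:ℝ) < 2 * π := by linarith
  set I := ∫ s in Ioc (0:ℝ) (2 * π), (vh s) ^ 2 with hI
  have hI0 : 0 ≤ I := setIntegral_nonneg measurableSet_Ioc (fun x _ => sq_nonneg _)
  have hsq_per : Periodic (fun s => vh s ^ 2) (2*π) := fun s => by simp [hper s]
  have hsq_ii : ∀ a b, IntervalIntegrable (fun s => vh s ^ 2) volume a b :=
    per_ii h2π hsq_per ((intervalIntegrable_iff_integrableOn_Ioc_of_le h2π.le).2 hint)
  have hsq0 : ∫ t in (0:ℝ)..(2*π), vh t ^ 2 = I := by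
    rw [intervalIntegral.integral_of_le h2π.le]
  -- shifted squares
  have hsq_shift_add : ∀ c : ℝ, ∫ t in (0:ℝ)..(2*π), vh (t + c) ^ 2 = I := by
    intro c
    rw [intervalIntegral.integral_comp_add_right (fun s => vh s ^ 2) c]
    have h3 := hsq_per.intervalIntegral_add_eq c 0
    rw [zero_add] at h3
    rw [show (0:ℝ) + c = c from by ring, show 2*π + c = c + 2*π from by ring, h3, hsq0]
  have hsq_shift_sub : ∀ c : ℝ, ∫ t in (0:ℝ)..(2*π), vh (t - c) ^ 2 = I := fun c => by
    simpa [sub_eq_add_neg] using hsq_shift_add (-c)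
  -- interval integrability of shifted squares
  have ii_add : ∀ c : ℝ, IntervalIntegrable (fun t => vh (t + c) ^ 2) volume 0 (2*π) := by
    intro c
    have h3 := (hsq_ii c (2*π + c)).comp_add_right c
    rw [show c - c = (0:ℝ) from by ring, show 2*π + c - c = 2*π from by ring] at h3
    exact h3
  have ii_sub : ∀ c : ℝ, IntervalIntegrable (fun t => vh (t - c) ^ 2) volume 0 (2*π) := by
    intro c
    have h3 := (hsq_ii (-c) (2*π - c)).comp_sub_right c
    rw [show -c + c = (0:ℝ) from by ring, show 2*π - c + c = 2*π from by ring] at h3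
    exact h3
  -- product integrability
  have hmul_ii : ∀ c : ℝ, IntervalIntegrable (fun t => vh t * vh (t - c)) volume 0 (2*π) := by
    intro c
    refine (intervalIntegrable_iff_integrableOn_Ioc_of_le h2π.le).2 ?_
    exact mul_io hmeas (hmeas.comp (measurable_id.sub_const c)) hint
      ((intervalIntegrable_iff_integrableOn_Ioc_of_le h2π.le).1 (ii_sub c))
  have habs : ∀ c : ℝ, (∫ t in (0:ℝ)..(2*π), |vh t * vh (t - c)|) ≤ I := by
    intro c
    have hle : (∫ t in (0:ℝ)..(2*π), |vh t * vh (t - c)|)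
        ≤ ∫ t in (0:ℝ)..(2*π), (vh t ^ 2 + vh (t - c) ^ 2)/2 := by
      refine intervalIntegral.integral_mono_on h2π.le (hmul_ii c).abs
        (((hsq_ii 0 (2*π)).add (ii_sub c)).div_const 2) ?_
      intro t _
      rw [abs_le]
      constructor <;> nlinarith [sq_nonneg (vh t + vh (t - c)), sq_nonneg (vh t - vh (t - c))]
    have heq : (∫ t in (0:ℝ)..(2*π), (vh t ^ 2 + vh (t - c) ^ 2)/2) = I := by
      rw [intervalIntegral.integral_div, intervalIntegral.integral_add (hsq_ii 0 (2*π)) (ii_sub c),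
        hsq0, hsq_shift_sub c]
      ring
    linarith [hle, heq.le]
  -- the correlation function
  set C : ℝ → ℝ := fun u => ∫ t in Ioc (0:ℝ) (2*π), vh t * vh (t - u) with hCdef
  have hF_meas : Measurable (fun p : ℝ × ℝ => vh p.2 * vh (p.2 - p.1)) :=
    (hmeas.comp measurable_snd).mul (hmeas.comp (measurable_snd.sub measurable_fst))
  have hC_sm : StronglyMeasurable C :=
    hF_meas.stronglyMeasurable.integral_prod_right'
  have hC_bd : ∀ u, |C u| ≤ I := by
    intro u
    have h1 : |C u| ≤ ∫ t in (0:ℝ)..(2*π), |vh t * vh (t - u)| := by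
      rw [hCdef]
      simp only []
      rw [← intervalIntegral.integral_of_le h2π.le]
      exact intervalIntegral.abs_integral_le_integral_abs h2π.le
    exact h1.trans (habs u)
  have hC_ii : ∀ a b, IntervalIntegrable C volume a b :=
    bdd_ii hC_sm.aestronglyMeasurable hC_bd
  have hC_sum : ∫ u in (0:ℝ)..(2*π), C u = 0 := by
    have huncur : Integrable (fun p : ℝ × ℝ => vh p.2 * vh (p.2 - p.1))
        ((volume.restrict (Ioc (0:ℝ) (2*π))).prod (volume.restrict (Ioc (0:ℝ) (2*π)))) := by
      rw [integrable_prod_iff hF_meas.aestronglyMeasurable]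
      constructor
      · filter_upwards with u
        exact (intervalIntegrable_iff_integrableOn_Ioc_of_le h2π.le).1 (hmul_ii u)
      · have hsm2 : StronglyMeasurable
            (fun u => ∫ t in Ioc (0:ℝ) (2*π), ‖vh t * vh (t - u)‖) :=
          hF_meas.norm.stronglyMeasurable.integral_prod_right'
        refine Integrable.mono' (integrable_const I) hsm2.aestronglyMeasurable ?_
        filter_upwards with u
        rw [Real.norm_eq_abs, abs_of_nonneg (integral_nonneg (fun t => norm_nonneg _))]
        have h4 : (∫ t in Ioc (0:ℝ) (2*π), ‖vh t * vh (t - u)‖)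
            = ∫ t in (0:ℝ)..(2*π), |vh t * vh (t - u)| := by
          rw [intervalIntegral.integral_of_le h2π.le]
          simp only [Real.norm_eq_abs]
        rw [h4]
        exact habs u
    have hswap := MeasureTheory.integral_integral_swap
      (f := fun u t => vh t * vh (t - u)) huncur
    have hinner0 : ∀ t : ℝ, (∫ u in Ioc (0:ℝ) (2*π), vh t * vh (t - u)) = 0 := by
      intro t
      rw [← intervalIntegral.integral_of_le h2π.le, intervalIntegral.integral_const_mul]
      have h5 : ∫ u in (0:ℝ)..(2*π), vh (t - u) = 0 := by
        rw [intervalIntegral.integral_comp_sub_left vh t, sub_zero]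
        have h6 := hper.intervalIntegral_add_eq (t - 2*π) 0
        rw [show t - 2*π + (2*π) = t from by ring, zero_add] at h6
        rw [h6, intervalIntegral.integral_of_le h2π.le, havg]
      rw [h5, mul_zero]
    rw [intervalIntegral.integral_of_le h2π.le]
    calc (∫ u in Ioc (0:ℝ) (2*π), C u)
        = ∫ t in Ioc (0:ℝ) (2*π), (∫ u in Ioc (0:ℝ) (2*π), vh t * vh (t - u)) := hswap
      _ = 0 := by simp [hinner0]
  -- correlation identity
  have hcorr : ∀ x : ℝ, (∫ t in (0:ℝ)..(2*π), vh (t + x) * vh (t - x)) = C (2*x) := by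
    intro x
    have he : (fun t => vh (t + x) * vh (t - x))
        = (fun t => (fun s => vh s * vh (s - 2*x)) (t + x)) := by
      funext t
      simp only []
      rw [show t + x - 2*x = t - x from by ring]
    rw [he, intervalIntegral.integral_comp_add_right (fun s => vh s * vh (s - 2*x)) x]
    have hper2 : Periodic (fun s => vh s * vh (s - 2*x)) (2*π) := by
      intro s
      simp only []
      rw [hper s, show s + 2*π - 2*x = (s - 2*x) + 2*π from by ring, hper (s - 2*x)]
    have h3 := hper2.intervalIntegral_add_eq x 0
    rw [zero_add] at h3
    rw [show (0:ℝ) + x = x from by ring, show 2*π + x = x + 2*π from by ring, h3,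
      intervalIntegral.integral_of_le h2π.le]
  -- cross-product interval integrability
  have ic : ∀ x : ℝ, IntervalIntegrable (fun t => vh (t + x) * vh (t - x)) volume 0 (2*π) := by
    intro x
    refine (intervalIntegrable_iff_integrableOn_Ioc_of_le h2π.le).2 ?_
    exact mul_io (hmeas.comp (measurable_id.add_const x)) (hmeas.comp (measurable_id.sub_const x))
      ((intervalIntegrable_iff_integrableOn_Ioc_of_le h2π.le).1 (ii_add x))
      ((intervalIntegrable_iff_integrableOn_Ioc_of_le h2π.le).1 (ii_sub x))
  have idiff : ∀ x : ℝ, IntervalIntegrable (fun t => (vh (t + x) - vh (t - x))^2) volume 0 (2*π) := by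
    intro x
    have he : (fun t => (vh (t + x) - vh (t - x))^2)
        = fun t => vh (t + x)^2 + vh (t - x)^2 - 2*(vh (t + x) * vh (t - x)) := by
      funext t; ring
    rw [he]
    exact ((ii_add x).add (ii_sub x)).sub ((ic x).const_mul 2)
  -- inner integral value
  have hinner : ∀ x : ℝ, (∫ t in Ioc (0:ℝ) (2*π), (vh (t + x) - vh (t - x))^2) = 2*I - 2*C (2*x) := by
    intro x
    rw [← intervalIntegral.integral_of_le h2π.le]
    have he : (fun t => (vh (t + x) - vh (t - x))^2)
        = fun t => vh (t + x)^2 + vh (t - x)^2 - 2*(vh (t + x) * vh (t - x)) := by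
      funext t; ring
    rw [he, intervalIntegral.integral_sub ((ii_add x).add (ii_sub x)) ((ic x).const_mul 2),
      intervalIntegral.integral_add (ii_add x) (ii_sub x), intervalIntegral.integral_const_mul,
      hsq_shift_add x, hsq_shift_sub x, hcorr x]
    ring
  -- Fubini for the double integral
  have hG_meas : Measurable (fun p : ℝ × ℝ => (vh (p.2 + p.1) - vh (p.2 - p.1))^2) :=
    ((hmeas.comp (measurable_snd.add measurable_fst)).sub
      (hmeas.comp (measurable_snd.sub measurable_fst))).pow_const 2
  have hG_int : Integrable (fun p : ℝ × ℝ => (vh (p.2 + p.1) - vh (p.2 - p.1))^2)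
      ((volume.restrict (Ioo (α*π) (π - α*π))).prod (volume.restrict (Ioc (0:ℝ) (2*π)))) := by
    rw [integrable_prod_iff hG_meas.aestronglyMeasurable]
    constructor
    · filter_upwards with x
      exact (intervalIntegrable_iff_integrableOn_Ioc_of_le h2π.le).1 (idiff x)
    · have hsm3 : StronglyMeasurable
          (fun x => ∫ t in Ioc (0:ℝ) (2*π), ‖(vh (t + x) - vh (t - x))^2‖) :=
        hG_meas.norm.stronglyMeasurable.integral_prod_right'
      refine Integrable.mono' (integrable_const (4*I)) hsm3.aestronglyMeasurable ?_
      filter_upwards with x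
      have h7 : ∀ t : ℝ, ‖(vh (t + x) - vh (t - x))^2‖ = (vh (t + x) - vh (t - x))^2 :=
        fun t => by rw [Real.norm_eq_abs]; exact abs_of_nonneg (sq_nonneg _)
      simp only [h7]
      rw [Real.norm_eq_abs,
        abs_of_nonneg (setIntegral_nonneg measurableSet_Ioc (fun t _ => sq_nonneg _)), hinner x]
      have h8 := abs_le.mp (hC_bd (2*x))
      linarith [h8.1]
  have hD : (∫ z in (Ioc (0:ℝ) (2 * π)) ×ˢ (Ioo (α * π) (π - α * π)),
        (vh (z.1 + z.2) - vh (z.1 - z.2)) ^ 2)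
      = ∫ x in Ioo (α*π) (π - α*π), (2*I - 2*C (2*x)) := by
    have h8 : ((volume : Measure (ℝ×ℝ)).restrict
          ((Ioc (0:ℝ) (2*π)) ×ˢ (Ioo (α*π) (π - α*π))))
        = ((volume.restrict (Ioc (0:ℝ) (2*π))).prod (volume.restrict (Ioo (α*π) (π - α*π)))) := by
      rw [Measure.volume_eq_prod, Measure.prod_restrict]
    rw [h8]
    rw [show (fun z : ℝ × ℝ => (vh (z.1 + z.2) - vh (z.1 - z.2)) ^ 2)
        = (fun z : ℝ × ℝ => (fun p : ℝ × ℝ => (vh (p.2 + p.1) - vh (p.2 - p.1))^2) z.swap)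
        from rfl]
    rw [MeasureTheory.integral_prod_swap (fun p : ℝ × ℝ => (vh (p.2 + p.1) - vh (p.2 - p.1))^2)]
    rw [MeasureTheory.integral_prod _ hG_int]
    exact integral_congr_ae (Filter.Eventually.of_forall (fun x => hinner x))
  -- endgame
  have hab2 : α*π ≤ π - α*π := by nlinarith
  have hIoo_eq : (∫ x in Ioo (α*π) (π - α*π), (2*I - 2*C (2*x)))
      = ∫ x in (α*π)..(π - α*π), (2*I - 2*C (2*x)) := by
    rw [intervalIntegral.integral_of_le hab2, integral_Ioc_eq_integral_Ioo]
  have hCc_ii : ∀ a b, IntervalIntegrable (fun x => C (2*x)) volume a b :=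
    bdd_ii ((hC_sm.comp_measurable (measurable_const_mul 2)).aestronglyMeasurable)
      (fun x => hC_bd (2*x))
  have hsplit : (∫ x in (α*π)..(π - α*π), (2*I - 2*C (2*x)))
      = (π - 2*(α*π))*(2*I) - (∫ u in (2*(α*π))..(2*(π - α*π)), C u) := by
    rw [intervalIntegral.integral_sub (intervalIntegrable_const) ((hCc_ii _ _).const_mul 2),
      intervalIntegral.integral_const, intervalIntegral.integral_const_mul,
      intervalIntegral.integral_comp_mul_left C two_ne_zero]
    simp only [smul_eq_mul]
    ring
  have hbound : ∀ (a b : ℝ), |∫ u in a..b, C u| ≤ I * |b - a| := fun a b =>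
    intervalIntegral.norm_integral_le_of_norm_le_const (fun x _ => (Real.norm_eq_abs _) ▸ hC_bd x)
  have hmid : |∫ u in (2*(α*π))..(2*(π - α*π)), C u| ≤ 4*(α*π)*I := by
    have e1 := intervalIntegral.integral_add_adjacent_intervals
      (hC_ii 0 (2*(α*π))) (hC_ii (2*(α*π)) (2*(π - α*π)))
    have e2 := intervalIntegral.integral_add_adjacent_intervals
      (hC_ii 0 (2*(π - α*π))) (hC_ii (2*(π - α*π)) (2*π))
    rw [hC_sum] at e2
    have b1 := hbound 0 (2*(α*π))
    have b2 := hbound (2*(π - α*π)) (2*π)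
    rw [sub_zero, abs_of_nonneg (by positivity : (0:ℝ) ≤ 2*(α*π))] at b1
    rw [show 2*π - 2*(π - α*π) = 2*(α*π) from by ring,
      abs_of_nonneg (by positivity : (0:ℝ) ≤ 2*(α*π))] at b2
    have hb1 := abs_le.mp b1
    have hb2 := abs_le.mp b2
    rw [abs_le]
    constructor <;> nlinarith [hb1.1, hb1.2, hb2.1, hb2.2]
  have hmid2 := abs_le.mp hmid
  constructor
  · rw [ge_iff_le, hD, hIoo_eq, hsplit]
    nlinarith [hmid2.2, hI0]
  · rw [ge_iff_le]
    nlinarith [mul_nonneg (mul_nonneg hπ.le hI0) (by linarith : (0:ℝ) ≤ 1 - 8*α)]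
end

section
/- Let k ≥ 2 be an integer, v̂ ∈ L^{2k}(𝕋) 2π-periodic with zero average, v(t,x) := v̂(t+x) - v̂(t-x), and 0 ≤ α ≤ 1/(4(1+2k)). Then ∫_{Ω_α} v^{2k} ≥ 2π[1 - 2(1+2k)α] ∫₀^{2π} v̂^{2k} ≥ π ∫₀^{2π} v̂^{2k}, where Ω_α := 𝕋 × (απ, π-απ). -/
open MeasureTheory Real Set Finset in
/-- tangent line: (m+1) A^m (B-A) ≤ B^(m+1) - A^(m+1) for nonneg A B -/
lemma aux_tangent (m : ℕ) {A B : ℝ} (hA : 0 ≤ A) (hB : 0 ≤ B) :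
    ((m : ℝ) + 1) * A ^ m * (B - A) ≤ B ^ (m + 1) - A ^ (m + 1) := by
  have hfac := geom_sum₂_mul B A (m + 1)
  simp only [Nat.add_sub_cancel] at hfac
  rcases le_total A B with hle | hle
  · have hsum : ((m : ℝ) + 1) * A ^ m ≤ ∑ i ∈ range (m + 1), B ^ i * A ^ (m - i) := by
      calc ((m : ℝ) + 1) * A ^ m = ∑ i ∈ range (m + 1), A ^ i * A ^ (m - i) := by
            rw [Finset.sum_congr rfl fun i hi => by
              rw [← pow_add, Nat.add_sub_cancel' (Nat.lt_succ_iff.1 (Finset.mem_range.1 hi))]]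
            simp [Finset.sum_const, mul_comm]
        _ ≤ _ := Finset.sum_le_sum fun i _ => by
            exact mul_le_mul_of_nonneg_right (pow_le_pow_left₀ hA hle i) (pow_nonneg hA _)
    have h0 : 0 ≤ B - A := by linarith
    nlinarith [mul_le_mul_of_nonneg_right hsum h0]
  · have hsum : (∑ i ∈ range (m + 1), B ^ i * A ^ (m - i)) ≤ ((m : ℝ) + 1) * A ^ m := by
      calc (∑ i ∈ range (m + 1), B ^ i * A ^ (m - i))
          ≤ ∑ i ∈ range (m + 1), A ^ i * A ^ (m - i) := Finset.sum_le_sum fun i _ => by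
            exact mul_le_mul_of_nonneg_right (pow_le_pow_left₀ hB hle i) (pow_nonneg hA _)
        _ = ((m : ℝ) + 1) * A ^ m := by
            rw [Finset.sum_congr rfl fun i hi => by
              rw [← pow_add, Nat.add_sub_cancel' (Nat.lt_succ_iff.1 (Finset.mem_range.1 hi))]]
            simp [Finset.sum_const, mul_comm]
    have h0 : B - A ≤ 0 := by linarith
    nlinarith [mul_le_mul_of_nonpos_right hsum h0]

lemma aux_even (k : ℕ) (a : ℝ) : |a| ^ (2 * k) = a ^ (2 * k) :=
  Even.pow_abs (even_two_mul k) a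

lemma aux_pow_nonneg (k : ℕ) (a : ℝ) : 0 ≤ a ^ (2 * k) := by
  rw [pow_mul]; positivity

/-- Weighted AM-GM -/
lemma aux_amgm (k : ℕ) (hk : 2 ≤ k) (a b : ℝ) :
    2 * (k : ℝ) * |a ^ (2 * k - 1) * b| ≤ (2 * (k : ℝ) - 1) * a ^ (2 * k) + b ^ (2 * k) := by
  have hm : 2 * k = (2 * k - 1) + 1 := by omega
  have ht := aux_tangent (2 * k - 1) (abs_nonneg a) (abs_nonneg b)
  have hcast : ((2 * k - 1 : ℕ) : ℝ) = 2 * (k : ℝ) - 1 := by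
    push_cast [Nat.cast_sub (by omega : 1 ≤ 2 * k)]; ring
  rw [hcast, ← hm] at ht
  have habs : |a ^ (2 * k - 1) * b| = |a| ^ (2 * k - 1) * |b| := by
    rw [abs_mul, abs_pow]
  have hps : |a| ^ (2 * k - 1) * |a| = |a| ^ (2 * k) := by
    rw [← pow_succ, ← hm]
  have h1 := aux_even k a
  have h2 := aux_even k b
  nlinarith [ht]

/-- crude bound -/
lemma aux_crude (k : ℕ) (hk : 2 ≤ k) (a b : ℝ) :
    |a ^ (2 * k - 1) * b| ≤ a ^ (2 * k) + b ^ (2 * k) := by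
  have h := aux_amgm k hk a b
  have h1 := aux_pow_nonneg k a
  have h2 := aux_pow_nonneg k b
  have hab := abs_nonneg (a ^ (2 * k - 1) * b)
  have hk' : (2:ℝ) ≤ (k : ℝ) := by exact_mod_cast hk
  nlinarith

/-- upper bound for integrability -/
lemma aux_upper (k : ℕ) (a b : ℝ) :
    (a - b) ^ (2 * k) ≤ 2 ^ (2 * k) * (a ^ (2 * k) + b ^ (2 * k)) := by
  have h1 : (a - b) ^ (2 * k) = |a - b| ^ (2 * k) := (aux_even k _).symm
  rcases le_total |a| |b| with hle | hle
  · have : |a - b| ≤ 2 * |b| := by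
      calc |a - b| ≤ |a| + |b| := abs_sub a b
        _ ≤ 2 * |b| := by linarith
    have h2 : |a - b| ^ (2 * k) ≤ (2 * |b|) ^ (2 * k) :=
      pow_le_pow_left₀ (abs_nonneg _) this _
    have h3 : (2 * |b|) ^ (2 * k) = 2 ^ (2 * k) * b ^ (2 * k) := by
      rw [mul_pow, aux_even]
    have h4 := aux_pow_nonneg k a
    have h5 : (0:ℝ) ≤ 2 ^ (2 * k) := by positivity
    nlinarith
  · have : |a - b| ≤ 2 * |a| := by
      calc |a - b| ≤ |a| + |b| := abs_sub a b
        _ ≤ 2 * |a| := by linarith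
    have h2 : |a - b| ^ (2 * k) ≤ (2 * |a|) ^ (2 * k) :=
      pow_le_pow_left₀ (abs_nonneg _) this _
    have h3 : (2 * |a|) ^ (2 * k) = 2 ^ (2 * k) * a ^ (2 * k) := by
      rw [mul_pow, aux_even]
    have h4 := aux_pow_nonneg k b
    have h5 : (0:ℝ) ≤ 2 ^ (2 * k) := by positivity
    nlinarith

lemma aux_main_nonneg (k : ℕ) (hk : 2 ≤ k) {a b : ℝ} (ha : 0 ≤ a) (hb : 0 ≤ b) (hba : b ≤ a) :
    a ^ (2 * k) + b ^ (2 * k) - 2 * (k : ℝ) * (a ^ (2 * k - 1) * b)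
      - 2 * (k : ℝ) * (a * b ^ (2 * k - 1)) ≤ (a - b) ^ (2 * k) := by
  have hm : 2 * k = (2 * k - 1) + 1 := by omega
  have hcast : ((2 * k - 1 : ℕ) : ℝ) + 1 = 2 * (k : ℝ) := by
    push_cast [Nat.cast_sub (by omega : 1 ≤ 2 * k)]; ring
  -- piece 1 : a^{2k} - (a-b)^{2k} ≤ 2k a^{2k-1} b
  have ht := aux_tangent (2 * k - 1) ha (by linarith : (0:ℝ) ≤ a - b)
  rw [hcast, ← hm] at ht
  -- ht : 2k * a^(2k-1) * ((a-b) - a) ≤ (a-b)^(2k) - a^(2k)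
  -- piece 2 : b^{2k} ≤ 2k a b^{2k-1}
  have hp2 : b ^ (2 * k) ≤ 2 * (k : ℝ) * (a * b ^ (2 * k - 1)) := by
    have h1 : b ^ (2 * k) = b ^ (2 * k - 1) * b := by rw [← pow_succ, ← hm]
    have h2 : b ^ (2 * k - 1) * b ≤ b ^ (2 * k - 1) * a :=
      mul_le_mul_of_nonneg_left hba (pow_nonneg hb _)
    have h3 : (0:ℝ) ≤ a * b ^ (2 * k - 1) := mul_nonneg ha (pow_nonneg hb _)
    have hk' : (2:ℝ) ≤ (k:ℝ) := by exact_mod_cast hk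
    nlinarith
  nlinarith [ht]

lemma aux_main_nn (k : ℕ) (hk : 2 ≤ k) {a b : ℝ} (ha : 0 ≤ a) (hb : 0 ≤ b) :
    a ^ (2 * k) + b ^ (2 * k) - 2 * (k : ℝ) * (a ^ (2 * k - 1) * b)
      - 2 * (k : ℝ) * (a * b ^ (2 * k - 1)) ≤ (a - b) ^ (2 * k) := by
  rcases le_total b a with h | h
  · exact aux_main_nonneg k hk ha hb h
  · have := aux_main_nonneg k hk hb ha h
    have he : (b - a) ^ (2 * k) = (a - b) ^ (2 * k) := by
      rw [show b - a = -(a - b) by ring, Even.neg_pow (even_two_mul k)]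
    rw [he] at this
    linarith

lemma aux_main_mixed (k : ℕ) (hk : 2 ≤ k) {a c : ℝ} (ha : 0 ≤ a) (hc : 0 ≤ c) :
    a ^ (2 * k) + c ^ (2 * k) + 2 * (k : ℝ) * (a ^ (2 * k - 1) * c)
      + 2 * (k : ℝ) * (a * c ^ (2 * k - 1)) ≤ (a + c) ^ (2 * k) := by
  rw [add_pow]
  have hS : ({0, 1, 2 * k - 1, 2 * k} : Finset ℕ) ⊆ Finset.range (2 * k + 1) := by
    intro i hi
    simp only [Finset.mem_insert, Finset.mem_singleton] at hi
    rcases hi with h | h | h | h <;> (subst h; simp only [Finset.mem_range]; omega)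
  refine le_trans (le_of_eq ?_)
    (Finset.sum_le_sum_of_subset_of_nonneg hS fun i _ _ => by positivity)
  have h01 : (0:ℕ) ≠ 1 := by omega
  have h02 : (0:ℕ) ≠ 2 * k - 1 := by omega
  have h03 : (0:ℕ) ≠ 2 * k := by omega
  have h12 : (1:ℕ) ≠ 2 * k - 1 := by omega
  have h13 : (1:ℕ) ≠ 2 * k := by omega
  have h23 : 2 * k - 1 ≠ 2 * k := by omega
  rw [show ({0, 1, 2 * k - 1, 2 * k} : Finset ℕ)
      = insert 0 (insert 1 (insert (2 * k - 1) ({2 * k} : Finset ℕ))) from rfl]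
  rw [Finset.sum_insert (by simp [h01, h02, h03]),
      Finset.sum_insert (by simp [h12, h13]),
      Finset.sum_insert (by simp [h23]), Finset.sum_singleton]
  have e0 : a ^ 0 * c ^ (2 * k - 0) * ((2 * k).choose 0 : ℝ) = c ^ (2 * k) := by
    simp
  have e1 : a ^ 1 * c ^ (2 * k - 1) * ((2 * k).choose 1 : ℝ)
      = 2 * (k : ℝ) * (a * c ^ (2 * k - 1)) := by
    rw [Nat.choose_one_right]; push_cast; ring
  have e2 : a ^ (2 * k - 1) * c ^ (2 * k - (2 * k - 1)) * ((2 * k).choose (2 * k - 1) : ℝ)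
      = 2 * (k : ℝ) * (a ^ (2 * k - 1) * c) := by
    have : (2 * k).choose (2 * k - 1) = 2 * k := by
      have := Nat.choose_symm (by omega : 1 ≤ 2 * k) (n := 2 * k)
      rw [this, Nat.choose_one_right]
    rw [show 2 * k - (2 * k - 1) = 1 by omega, this]
    push_cast; ring
  have e3 : a ^ (2 * k) * c ^ (2 * k - 2 * k) * ((2 * k).choose (2 * k) : ℝ) = a ^ (2 * k) := by
    simp
  rw [e0, e1, e2, e3]; ring

lemma aux_main (k : ℕ) (hk : 2 ≤ k) (a b : ℝ) :
    a ^ (2 * k) + b ^ (2 * k) - 2 * (k : ℝ) * (a ^ (2 * k - 1) * b)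
      - 2 * (k : ℝ) * (a * b ^ (2 * k - 1)) ≤ (a - b) ^ (2 * k) := by
  have hodd : ∀ x : ℝ, (-x) ^ (2 * k - 1) = -x ^ (2 * k - 1) :=
    fun x => Odd.neg_pow ⟨k - 1, by omega⟩ x
  have heven : ∀ x : ℝ, (-x) ^ (2 * k) = x ^ (2 * k) :=
    fun x => Even.neg_pow (even_two_mul k) x
  rcases le_total 0 a with ha | ha <;> rcases le_total 0 b with hb | hb
  · exact aux_main_nn k hk ha hb
  · -- a ≥ 0, b ≤ 0
    have := aux_main_mixed k hk ha (by linarith : (0:ℝ) ≤ -b)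
    have h1 : (a + -b) ^ (2 * k) = (a - b) ^ (2 * k) := by rw [← sub_eq_add_neg]
    have h2 : (-b) ^ (2 * k) = b ^ (2 * k) := heven b
    have h3 : a ^ (2 * k - 1) * -b = -(a ^ (2 * k - 1) * b) := by ring
    have h4 : a * (-b) ^ (2 * k - 1) = -(a * b ^ (2 * k - 1)) := by rw [hodd]; ring
    rw [h1, h2, h3, h4] at this
    linarith
  · -- a ≤ 0, b ≥ 0
    have := aux_main_mixed k hk (by linarith : (0:ℝ) ≤ -a) hb
    have h1 : (-a + b) ^ (2 * k) = (a - b) ^ (2 * k) := by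
      rw [show -a + b = -(a - b) by ring, heven]
    have h2 : (-a) ^ (2 * k) = a ^ (2 * k) := heven a
    have h3 : (-a) ^ (2 * k - 1) * b = -(a ^ (2 * k - 1) * b) := by rw [hodd]; ring
    have h4 : -a * b ^ (2 * k - 1) = -(a * b ^ (2 * k - 1)) := by ring
    rw [h1, h2, h3, h4] at this
    linarith
  · -- both ≤ 0
    have := aux_main_nn k hk (by linarith : (0:ℝ) ≤ -a) (by linarith : (0:ℝ) ≤ -b)
    have h1 : (-a - -b) ^ (2 * k) = (a - b) ^ (2 * k) := by
      rw [show -a - -b = -(a - b) by ring, heven]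
    have h2 : (-a) ^ (2 * k) = a ^ (2 * k) := heven a
    have h2' : (-b) ^ (2 * k) = b ^ (2 * k) := heven b
    have h3 : (-a) ^ (2 * k - 1) * -b = a ^ (2 * k - 1) * b := by rw [hodd]; ring
    have h4 : -a * (-b) ^ (2 * k - 1) = a * b ^ (2 * k - 1) := by rw [hodd]; ring
    rw [h1, h2, h2', h3, h4] at this
    linarith

open MeasureTheory Real Set in
lemma aux_shift_eq {w : ℝ → ℝ} (hper : Function.Periodic w (2 * π)) (c : ℝ) :
    ∫ t in Ioc 0 (2 * π), w (t + c) = ∫ t in Ioc 0 (2 * π), w t := by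
  have h2π : (0:ℝ) ≤ 2 * π := by positivity
  rw [← intervalIntegral.integral_of_le h2π, ← intervalIntegral.integral_of_le h2π,
    intervalIntegral.integral_comp_add_right]
  rw [zero_add, add_comm (2 * π) c]
  have := hper.intervalIntegral_add_eq c 0
  rwa [zero_add] at this

open MeasureTheory Real Set in
lemma aux_reflect_eq {w : ℝ → ℝ} (hper : Function.Periodic w (2 * π)) (c : ℝ) :
    ∫ t in Ioc 0 (2 * π), w (c - t) = ∫ t in Ioc 0 (2 * π), w t := by
  have h2π : (0:ℝ) ≤ 2 * π := by positivity
  rw [← intervalIntegral.integral_of_le h2π, ← intervalIntegral.integral_of_le h2π,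
    intervalIntegral.integral_comp_sub_left]
  have := hper.intervalIntegral_add_eq (c - 2 * π) 0
  rw [zero_add, sub_add_cancel] at this
  rwa [sub_zero]

open MeasureTheory Real Set in
lemma aux_shift_int {w : ℝ → ℝ} (hper : Function.Periodic w (2 * π))
    (hint : IntegrableOn w (Ioc 0 (2 * π))) (c : ℝ) :
    IntegrableOn (fun t => w (t + c)) (Ioc 0 (2 * π)) := by
  have h2π : (0:ℝ) < 2 * π := by positivity
  have h0 : IntervalIntegrable w volume 0 (2 * π) :=
    (intervalIntegrable_iff_integrableOn_Ioc_of_le h2π.le).2 hint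
  have h1 : IntervalIntegrable w volume (2 * π) (4 * π) := by
    have h := h0.comp_add_right (-(2 * π))
    have he : (fun x => w (x + -(2 * π))) = w := funext fun x => by
      rw [← sub_eq_add_neg]; exact hper.sub_eq x
    rw [he] at h
    rw [show (0:ℝ) - -(2 * π) = 2 * π by ring, show 2 * π - -(2 * π) = 4 * π by ring] at h
    exact h
  have h04 : IntervalIntegrable w volume 0 (4 * π) := h0.trans h1
  set n : ℤ := ⌊c / (2 * π)⌋ with hn
  set c' : ℝ := c - 2 * π * n with hc'
  have hc0 : 0 ≤ c' := by
    have h := Int.floor_le (c / (2 * π))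
    rw [← hn] at h
    have := (le_div_iff₀ h2π).1 h
    simp only [hc']; linarith
  have hc2 : c' ≤ 2 * π := by
    have h := Int.lt_floor_add_one (c / (2 * π))
    rw [← hn] at h
    have := (div_lt_iff₀ h2π).1 h
    simp only [hc']; nlinarith
  have hmono : IntervalIntegrable w volume c' (c' + 2 * π) := by
    apply h04.mono_set
    rw [uIcc_of_le (by linarith : c' ≤ c' + 2 * π), uIcc_of_le (by linarith : (0:ℝ) ≤ 4 * π)]
    exact Icc_subset_Icc hc0 (by linarith)
  have h2 := hmono.comp_add_right c'
  rw [sub_self, show c' + 2 * π - c' = 2 * π by ring] at h2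
  have h4 : (fun x => w (x + c')) = fun x => w (x + c) := funext fun x => by
    have harg : x + c' = (x + c) - n * (2 * π) := by simp only [hc']; ring
    rw [harg, hper.sub_int_mul_eq n]
  rw [h4] at h2
  exact (intervalIntegrable_iff_integrableOn_Ioc_of_le h2π.le).1 h2

open MeasureTheory Real Set in
lemma aux_key_int {w : ℝ → ℝ} (hw : Measurable w)
    (hw0 : ∀ s, 0 ≤ w s) (hper : Function.Periodic w (2 * π))
    (hint : IntegrableOn w (Ioc 0 (2 * π))) (σ : ℝ) (s : Set ℝ) (hsf : volume s ≠ ⊤) :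
    Integrable (fun z : ℝ × ℝ => w (z.1 + σ * z.2))
      ((volume.restrict (Ioc 0 (2 * π))).prod (volume.restrict s)) := by
  haveI : IsFiniteMeasure (volume.restrict s) :=
    ⟨by rw [Measure.restrict_apply_univ]; exact lt_top_iff_ne_top.2 hsf⟩
  have hm : Measurable fun z : ℝ × ℝ => w (z.1 + σ * z.2) :=
    hw.comp (measurable_fst.add (measurable_snd.const_mul σ))
  refine (integrable_prod_iff' hm.aestronglyMeasurable).2 ⟨Filter.Eventually.of_forall fun x => ?_, ?_⟩
  · exact aux_shift_int hper hint (σ * x)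
  · have he : (fun x => ∫ t, ‖w (t + σ * x)‖ ∂(volume.restrict (Ioc 0 (2 * π))))
        = fun _ : ℝ => ∫ t in Ioc 0 (2 * π), w t := by
      funext x
      rw [← aux_shift_eq hper (σ * x)]
      exact integral_congr_ae (Filter.Eventually.of_forall fun t => norm_of_nonneg (hw0 _))
    rw [he]
    exact integrable_const _
open MeasureTheory Real Set

theorem stmt_15 (k : ℕ) (hk : 2 ≤ k) (vh : ℝ → ℝ) (α : ℝ)
    (hα0 : 0 ≤ α) (hα1 : α ≤ 1 / (4 * (1 + 2 * (k : ℝ))))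
    (hper : Function.Periodic vh (2 * π)) (hmeas : Measurable vh)
    (hint : IntegrableOn (fun s => (vh s) ^ (2 * k)) (Ioc 0 (2 * π)))
    (havg : ∫ s in Ioc 0 (2 * π), vh s = 0) :
    (∫ z in (Ioc 0 (2 * π)) ×ˢ (Ioo (α * π) (π - α * π)),
        (vh (z.1 + z.2) - vh (z.1 - z.2)) ^ (2 * k)) ≥
        2 * π * (1 - 2 * (1 + 2 * (k : ℝ)) * α) * ∫ s in Ioc 0 (2 * π), (vh s) ^ (2 * k) ∧
      2 * π * (1 - 2 * (1 + 2 * (k : ℝ)) * α) * (∫ s in Ioc 0 (2 * π), (vh s) ^ (2 * k)) ≥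
        π * ∫ s in Ioc 0 (2 * π), (vh s) ^ (2 * k) := by
  have hπ : (0:ℝ) < π := Real.pi_pos
  have h2π : (0:ℝ) < 2 * π := by positivity
  have hk' : (2:ℝ) ≤ (k:ℝ) := by exact_mod_cast hk
  have h2k0 : (0:ℝ) < 2 * (k:ℝ) := by linarith
  have hkpos : (0:ℝ) < 4 * (1 + 2 * (k:ℝ)) := by linarith
  have hα4 : α * (4 * (1 + 2 * (k:ℝ))) ≤ 1 := (le_div_iff₀ hkpos).1 hα1
  have hα20 : 2 * α ≤ 1 := by nlinarith
  set J : Set ℝ := Ioc 0 (2 * π) with hJdef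
  set X : Set ℝ := Ioo (α * π) (π - α * π) with hXdef
  set X' : Set ℝ := Ioo (0:ℝ) π with hX'def
  set w : ℝ → ℝ := fun s => (vh s) ^ (2 * k) with hwdef
  set M : ℝ := ∫ s in J, w s with hMdef
  -- basic facts
  have hwmeas : Measurable w := hmeas.pow_const (2 * k)
  have hw0 : ∀ s, 0 ≤ w s := fun s => aux_pow_nonneg k (vh s)
  have hwper : Function.Periodic w (2 * π) := fun s => by
    simp only [hwdef]; rw [hper s]
  have hM0 : 0 ≤ M := setIntegral_nonneg measurableSet_Ioc fun s _ => hw0 s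
  have hXsub : X ⊆ X' := Ioo_subset_Ioo (by positivity) (by nlinarith)
  have hXmeas : MeasurableSet X := measurableSet_Ioo
  have hX'f : volume X' ≠ ⊤ := by rw [Real.volume_Ioo]; exact ENNReal.ofReal_ne_top
  have hXf : volume X ≠ ⊤ := by rw [Real.volume_Ioo]; exact ENNReal.ofReal_ne_top
  have hJf : volume J ≠ ⊤ := by rw [hJdef, Real.volume_Ioc]; exact ENNReal.ofReal_ne_top
  -- measurability of composed maps
  have hm1 : Measurable fun z : ℝ × ℝ => vh (z.1 + z.2) :=
    hmeas.comp (measurable_fst.add measurable_snd)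
  have hm2 : Measurable fun z : ℝ × ℝ => vh (z.1 - z.2) :=
    hmeas.comp (measurable_fst.sub measurable_snd)
  -- product integrability of the dominating function
  have hP : ∀ s : Set ℝ, volume s ≠ ⊤ →
      Integrable (fun z : ℝ × ℝ => w (z.1 + z.2) + w (z.1 - z.2))
        ((volume.restrict J).prod (volume.restrict s)) := by
    intro s hs
    have h1 := aux_key_int hwmeas hw0 hwper hint 1 s hs
    have h2 := aux_key_int hwmeas hw0 hwper hint (-1) s hs
    simp only [one_mul] at h1
    simp only [neg_one_mul, ← sub_eq_add_neg] at h2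
    exact h1.add h2
  -- cross terms product integrability
  have hC1 : ∀ s : Set ℝ, volume s ≠ ⊤ →
      Integrable (fun z : ℝ × ℝ => (vh (z.1 + z.2)) ^ (2 * k - 1) * vh (z.1 - z.2))
        ((volume.restrict J).prod (volume.restrict s)) := by
    intro s hs
    refine (hP s hs).mono' ((hm1.pow_const _).mul hm2).aestronglyMeasurable
      (Filter.Eventually.of_forall fun z => ?_)
    rw [Real.norm_eq_abs]
    exact aux_crude k hk _ _
  have hC2 : ∀ s : Set ℝ, volume s ≠ ⊤ →
      Integrable (fun z : ℝ × ℝ => vh (z.1 + z.2) * (vh (z.1 - z.2)) ^ (2 * k - 1))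
        ((volume.restrict J).prod (volume.restrict s)) := by
    intro s hs
    refine (hP s hs).mono' (hm1.mul (hm2.pow_const _)).aestronglyMeasurable
      (Filter.Eventually.of_forall fun z => ?_)
    rw [Real.norm_eq_abs, mul_comm]
    have := aux_crude k hk (vh (z.1 - z.2)) (vh (z.1 + z.2))
    linarith
  -- the two integrands
  have hGint : Integrable (fun z : ℝ × ℝ => w (z.1 + z.2) + w (z.1 - z.2)
      - 2 * (k:ℝ) * ((vh (z.1 + z.2)) ^ (2 * k - 1) * vh (z.1 - z.2))
      - 2 * (k:ℝ) * (vh (z.1 + z.2) * (vh (z.1 - z.2)) ^ (2 * k - 1)))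
      ((volume.restrict J).prod (volume.restrict X)) :=
    ((hP X hXf).sub ((hC1 X hXf).const_mul _)).sub ((hC2 X hXf).const_mul _)
  have hFint : Integrable (fun z : ℝ × ℝ => (vh (z.1 + z.2) - vh (z.1 - z.2)) ^ (2 * k))
      ((volume.restrict J).prod (volume.restrict X)) := by
    refine ((hP X hXf).const_mul ((2:ℝ) ^ (2 * k))).mono'
      ((hm1.sub hm2).pow_const _).aestronglyMeasurable
      (Filter.Eventually.of_forall fun z => ?_)
    rw [Real.norm_eq_abs, abs_of_nonneg (aux_pow_nonneg k _)]
    exact aux_upper k _ _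
  -- pointwise comparison
  have hmono : (∫ z, (w (z.1 + z.2) + w (z.1 - z.2)
        - 2 * (k:ℝ) * ((vh (z.1 + z.2)) ^ (2 * k - 1) * vh (z.1 - z.2))
        - 2 * (k:ℝ) * (vh (z.1 + z.2) * (vh (z.1 - z.2)) ^ (2 * k - 1)))
        ∂((volume.restrict J).prod (volume.restrict X)))
      ≤ ∫ z, (vh (z.1 + z.2) - vh (z.1 - z.2)) ^ (2 * k)
        ∂((volume.restrict J).prod (volume.restrict X)) := by
    refine integral_mono hGint hFint fun z => ?_
    have := aux_main k hk (vh (z.1 + z.2)) (vh (z.1 - z.2))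
    simp only [hwdef]
    linarith
  -- conversion of box integral to product measure
  have hbox : (∫ z in J ×ˢ X, (vh (z.1 + z.2) - vh (z.1 - z.2)) ^ (2 * k))
      = ∫ z, (vh (z.1 + z.2) - vh (z.1 - z.2)) ^ (2 * k)
        ∂((volume.restrict J).prod (volume.restrict X)) := by
    rw [Measure.prod_restrict, ← Measure.volume_eq_prod]
  -- the correlation function
  set Φ : ℝ → ℝ := fun y => ∫ s in J, (vh s) ^ (2 * k - 1) * vh (s - y) with hΦdef
  have hΦper : Function.Periodic Φ (2 * π) := by
    intro y
    simp only [hΦdef]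
    refine integral_congr_ae (Filter.Eventually.of_forall fun s => ?_)
    show vh s ^ (2 * k - 1) * vh (s - (y + 2 * π)) = vh s ^ (2 * k - 1) * vh (s - y)
    rw [show s - (y + 2 * π) = (s - y) - 2 * π by ring, hper.sub_eq]
  -- single-variable shifted integrability
  have hj1 : ∀ c : ℝ, IntegrableOn (fun t => w (t + c)) J := fun c =>
    aux_shift_int hwper hint c
  have hj2 : ∀ x : ℝ, IntegrableOn (fun t => w (t - x)) J := fun x => by
    simp only [sub_eq_add_neg]; exact hj1 (-x)
  have hj3 : ∀ x : ℝ, IntegrableOn (fun t => (vh (t + x)) ^ (2 * k - 1) * vh (t - x)) J := by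
    intro x
    refine ((hj1 x).add (hj2 x)).mono'
      (((hmeas.comp (measurable_id.add_const x)).pow_const _).mul
        (hmeas.comp (measurable_id.sub_const x))).aestronglyMeasurable
      (Filter.Eventually.of_forall fun t => ?_)
    rw [Real.norm_eq_abs]
    exact aux_crude k hk _ _
  have hj4 : ∀ x : ℝ, IntegrableOn (fun t => vh (t + x) * (vh (t - x)) ^ (2 * k - 1)) J := by
    intro x
    refine ((hj1 x).add (hj2 x)).mono'
      ((hmeas.comp (measurable_id.add_const x)).mul
        ((hmeas.comp (measurable_id.sub_const x)).pow_const _)).aestronglyMeasurable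
      (Filter.Eventually.of_forall fun t => ?_)
    simp only [Pi.add_apply]
    rw [Real.norm_eq_abs, mul_comm]
    have := aux_crude k hk (vh (t - x)) (vh (t + x))
    simp only [hwdef]
    linarith
  have hjy : ∀ y : ℝ, IntegrableOn (fun s => (vh s) ^ (2 * k - 1) * vh (s - y)) J := by
    intro y
    refine (hint.add (hj2 y)).mono'
      ((hmeas.pow_const _).mul (hmeas.comp (measurable_id.sub_const y))).aestronglyMeasurable
      (Filter.Eventually.of_forall fun s => ?_)
    rw [Real.norm_eq_abs]
    exact aux_crude k hk _ _
  -- inner integral values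
  have hi1 : ∀ c : ℝ, (∫ t in J, w (t + c)) = M := fun c => by
    rw [hJdef] at *; exact aux_shift_eq hwper c
  have hi2 : ∀ x : ℝ, (∫ t in J, w (t - x)) = M := fun x => by
    simp only [sub_eq_add_neg]; exact hi1 (-x)
  have hi3 : ∀ x : ℝ, (∫ t in J, (vh (t + x)) ^ (2 * k - 1) * vh (t - x)) = Φ (2 * x) := by
    intro x
    have hGper : Function.Periodic (fun s => (vh s) ^ (2 * k - 1) * vh (s - 2 * x)) (2 * π) := by
      intro s
      simp only
      rw [hper s, show s + 2 * π - 2 * x = (s - 2 * x) + 2 * π by ring, hper (s - 2 * x)]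
    have h1 : (∫ t in J, (vh (t + x)) ^ (2 * k - 1) * vh (t - x))
        = ∫ t in J, (fun s => (vh s) ^ (2 * k - 1) * vh (s - 2 * x)) (t + x) := by
      refine integral_congr_ae (Filter.Eventually.of_forall fun t => ?_)
      simp only
      rw [show t + x - 2 * x = t - x by ring]
    rw [h1, hJdef] at *
    exact aux_shift_eq hGper x
  have hi4 : ∀ x : ℝ, (∫ t in J, vh (t + x) * (vh (t - x)) ^ (2 * k - 1)) = Φ (-(2 * x)) := by
    intro x
    have hGper : Function.Periodic (fun s => (vh s) ^ (2 * k - 1) * vh (s + 2 * x)) (2 * π) := by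
      intro s
      simp only
      rw [hper s, show s + 2 * π + 2 * x = (s + 2 * x) + 2 * π by ring, hper (s + 2 * x)]
    have h1 : (∫ t in J, vh (t + x) * (vh (t - x)) ^ (2 * k - 1))
        = ∫ t in J, (fun s => (vh s) ^ (2 * k - 1) * vh (s + 2 * x)) (t + -x) := by
      refine integral_congr_ae (Filter.Eventually.of_forall fun t => ?_)
      simp only
      rw [show t + -x + 2 * x = t + x by ring, show t + -x = t - x by ring, mul_comm]
    have h2 : Φ (-(2 * x)) = ∫ s in J, (vh s) ^ (2 * k - 1) * vh (s + 2 * x) := by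
      simp only [hΦdef]
      refine integral_congr_ae (Filter.Eventually.of_forall fun s => ?_)
      show vh s ^ (2 * k - 1) * vh (s - -(2 * x)) = vh s ^ (2 * k - 1) * vh (s + 2 * x)
      rw [sub_neg_eq_add]
    rw [h1, h2, hJdef] at *
    exact aux_shift_eq hGper (-x)
  -- inner integral of G
  have hinner : ∀ x : ℝ, (∫ t in J, (w (t + x) + w (t - x)
      - 2 * (k:ℝ) * ((vh (t + x)) ^ (2 * k - 1) * vh (t - x))
      - 2 * (k:ℝ) * (vh (t + x) * (vh (t - x)) ^ (2 * k - 1))))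
      = 2 * M - 2 * (k:ℝ) * Φ (2 * x) - 2 * (k:ℝ) * Φ (-(2 * x)) := by
    intro x
    have ha : IntegrableOn (fun t => w (t + x) + w (t - x)) J volume := (hj1 x).add (hj2 x)
    have hb : IntegrableOn (fun t => 2 * (k:ℝ) * ((vh (t + x)) ^ (2 * k - 1) * vh (t - x)))
        J volume := (hj3 x).const_mul _
    have hc : IntegrableOn (fun t => 2 * (k:ℝ) * (vh (t + x) * (vh (t - x)) ^ (2 * k - 1)))
        J volume := (hj4 x).const_mul _
    have hab : IntegrableOn (fun t => w (t + x) + w (t - x)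
        - 2 * (k:ℝ) * ((vh (t + x)) ^ (2 * k - 1) * vh (t - x))) J volume := ha.sub hb
    rw [integral_sub hab hc, integral_sub ha hb,
      integral_add (hj1 x) (hj2 x), integral_const_mul, integral_const_mul,
      hi1 x, hi2 x, hi3 x, hi4 x]
    ring
  -- Fubini : the correlation integrates to zero over a period
  have hGprod : Integrable (fun z : ℝ × ℝ => (vh z.1) ^ (2 * k - 1) * vh (z.1 - z.2))
      ((volume.restrict J).prod (volume.restrict J)) := by
    have h0 := aux_key_int hwmeas hw0 hwper hint 0 J hJf
    simp only [zero_mul, add_zero] at h0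
    have hm := aux_key_int hwmeas hw0 hwper hint (-1) J hJf
    simp only [neg_one_mul, ← sub_eq_add_neg] at hm
    have hdom : Integrable (fun z : ℝ × ℝ => w z.1 + w (z.1 - z.2))
        ((volume.restrict J).prod (volume.restrict J)) := h0.add hm
    refine hdom.mono' (((hmeas.comp measurable_fst).pow_const _).mul
      (hmeas.comp (measurable_fst.sub measurable_snd))).aestronglyMeasurable
      (Filter.Eventually.of_forall fun z => ?_)
    rw [Real.norm_eq_abs]
    exact aux_crude k hk _ _
  have hJΦ : (∫ y in J, Φ y) = 0 := by
    have h1 := integral_prod _ hGprod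
    have h2 := integral_prod_symm _ hGprod
    have h3 : (∫ s in J, ∫ y in J, (vh s) ^ (2 * k - 1) * vh (s - y)) = 0 := by
      have hptw : ∀ s : ℝ, (∫ y in J, (vh s) ^ (2 * k - 1) * vh (s - y)) = 0 := by
        intro s
        rw [integral_const_mul]
        have hrefl : (∫ y in J, vh (s - y)) = ∫ y in J, vh y := aux_reflect_eq hper s
        rw [hrefl, havg, mul_zero]
      rw [integral_congr_ae (Filter.Eventually.of_forall hptw)]
      simp
    have h4 : (∫ y in J, Φ y)
        = ∫ z, (fun z : ℝ × ℝ => (vh z.1) ^ (2 * k - 1) * vh (z.1 - z.2)) z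
          ∂((volume.restrict J).prod (volume.restrict J)) := by
      rw [h2]
    rw [h4, h1]
    exact h3
  have hJΦ' : (∫ y in (0:ℝ)..(2 * π), Φ y) = 0 := by
    rw [intervalIntegral.integral_of_le h2π.le]
    exact hJΦ
  -- vanishing over the half period
  have hzero2 : (∫ x in X', Φ (2 * x)) = 0 := by
    have h1 : (∫ x in X', Φ (2 * x)) = ∫ x in (0:ℝ)..π, Φ (2 * x) := by
      rw [hX'def, ← integral_Ioc_eq_integral_Ioo, ← intervalIntegral.integral_of_le hπ.le]
    have h2 := intervalIntegral.integral_comp_mul_left (a := (0:ℝ)) (b := π) Φ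
      (by norm_num : (2:ℝ) ≠ 0)
    rw [mul_zero] at h2
    rw [h1, h2, hJΦ', smul_zero]
  have hzerom2 : (∫ x in X', Φ (-(2 * x))) = 0 := by
    have h1 : (∫ x in X', Φ (-(2 * x))) = ∫ x in (0:ℝ)..π, Φ ((-2) * x) := by
      rw [hX'def, ← integral_Ioc_eq_integral_Ioo, ← intervalIntegral.integral_of_le hπ.le]
      refine intervalIntegral.integral_congr fun x _ => ?_
      rw [show -(2 * x) = (-2) * x by ring]
    have h2 := intervalIntegral.integral_comp_mul_left (a := (0:ℝ)) (b := π) Φ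
      (by norm_num : (-2:ℝ) ≠ 0)
    rw [mul_zero] at h2
    have h3 : (∫ y in (0:ℝ)..(-2 * π), Φ y) = - ∫ y in (-2 * π)..(0:ℝ), Φ y :=
      intervalIntegral.integral_symm _ _
    have h4 := hΦper.intervalIntegral_add_eq (-(2 * π)) 0
    rw [show -(2 * π) + 2 * π = (0:ℝ) by ring, zero_add] at h4
    rw [h1, h2, h3, show (-2:ℝ) * π = -(2 * π) by ring, h4, hJΦ']
    simp
  -- integrability of the correlation composites on X'
  have hΦ2X' : IntegrableOn (fun x => Φ (2 * x)) X' := by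
    have h1 := (hC1 X' hX'f).integral_prod_right
    exact h1.congr (Filter.Eventually.of_forall fun x => hi3 x)
  have hΦm2X' : IntegrableOn (fun x => Φ (-(2 * x))) X' := by
    have h1 := (hC2 X' hX'f).integral_prod_right
    exact h1.congr (Filter.Eventually.of_forall fun x => hi4 x)
  -- uniform bound on the correlation
  have hΦM : ∀ y : ℝ, |Φ y| ≤ M := by
    intro y
    have habs : |Φ y| ≤ ∫ s in J, |(vh s) ^ (2 * k - 1) * vh (s - y)| := by
      simp only [hΦdef]
      calc |∫ s in J, (vh s) ^ (2 * k - 1) * vh (s - y)|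
          = ‖∫ s in J, (vh s) ^ (2 * k - 1) * vh (s - y)‖ := (Real.norm_eq_abs _).symm
        _ ≤ ∫ s in J, ‖(vh s) ^ (2 * k - 1) * vh (s - y)‖ := norm_integral_le_integral_norm _
        _ = ∫ s in J, |(vh s) ^ (2 * k - 1) * vh (s - y)| := by
            simp only [Real.norm_eq_abs]
    have hstep : (∫ s in J, |(vh s) ^ (2 * k - 1) * vh (s - y)|)
        ≤ ∫ s in J, ((2 * (k:ℝ) - 1) * w s + w (s - y)) / (2 * (k:ℝ)) := by
      refine setIntegral_mono_on ((hjy y).abs)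
        (((hint.const_mul _).add (hj2 y)).div_const _) measurableSet_Ioc fun s _ => ?_
      rw [le_div_iff₀ h2k0]
      have h := aux_amgm k hk (vh s) (vh (s - y))
      simp only [hwdef]
      linarith
    have heval : (∫ s in J, ((2 * (k:ℝ) - 1) * w s + w (s - y)) / (2 * (k:ℝ))) = M := by
      rw [integral_div, integral_add (hint.const_mul _) (hj2 y), integral_const_mul, hi2 y,
        ← hMdef]
      field_simp
      ring
    linarith
  -- splitting off the boundary strips
  have hsplit2 : (∫ x in X, Φ (2 * x)) = - ∫ x in X' \ X, Φ (2 * x) := by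
    have h := integral_diff hXmeas hΦ2X' hXsub
    rw [hzero2] at h
    linarith
  have hsplitm2 : (∫ x in X, Φ (-(2 * x))) = - ∫ x in X' \ X, Φ (-(2 * x)) := by
    have h := integral_diff hXmeas hΦm2X' hXsub
    rw [hzerom2] at h
    linarith
  have hvolD : (volume (X' \ X)).toReal = 2 * α * π := by
    rw [measure_diff hXsub hXmeas.nullMeasurableSet hXf, hX'def, hXdef,
      Real.volume_Ioo, Real.volume_Ioo,
      ← ENNReal.ofReal_sub _ (by nlinarith : (0:ℝ) ≤ π - α * π - α * π),
      ENNReal.toReal_ofReal (by nlinarith : (0:ℝ) ≤ π - 0 - (π - α * π - α * π))]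
    ring
  have hvolDlt : volume (X' \ X) < ⊤ :=
    lt_of_le_of_lt (measure_mono diff_subset) hX'f.lt_top
  have hDb2 : |∫ x in X' \ X, Φ (2 * x)| ≤ M * (2 * α * π) := by
    have h1 : ‖∫ x in X' \ X, Φ (2 * x)‖ ≤ M * (volume (X' \ X)).toReal := by
      refine norm_setIntegral_le_of_norm_le_const hvolDlt (fun x _ => ?_)
      rw [Real.norm_eq_abs]
      exact hΦM _
    rw [hvolD] at h1
    rw [← Real.norm_eq_abs]
    exact h1
  have hDbm2 : |∫ x in X' \ X, Φ (-(2 * x))| ≤ M * (2 * α * π) := by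
    have h1 : ‖∫ x in X' \ X, Φ (-(2 * x))‖ ≤ M * (volume (X' \ X)).toReal := by
      refine norm_setIntegral_le_of_norm_le_const hvolDlt (fun x _ => ?_)
      rw [Real.norm_eq_abs]
      exact hΦM _
    rw [hvolD] at h1
    rw [← Real.norm_eq_abs]
    exact h1
  -- the value of the integral of G over the box
  have hGval : (∫ z, (w (z.1 + z.2) + w (z.1 - z.2)
        - 2 * (k:ℝ) * ((vh (z.1 + z.2)) ^ (2 * k - 1) * vh (z.1 - z.2))
        - 2 * (k:ℝ) * (vh (z.1 + z.2) * (vh (z.1 - z.2)) ^ (2 * k - 1)))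
        ∂((volume.restrict J).prod (volume.restrict X)))
      = 2 * M * (π - 2 * α * π) - 2 * (k:ℝ) * (∫ x in X, Φ (2 * x))
        - 2 * (k:ℝ) * (∫ x in X, Φ (-(2 * x))) := by
    rw [integral_prod_symm _ hGint]
    have hcong : ∀ x : ℝ, (∫ t in J, (w (t + x) + w (t - x)
        - 2 * (k:ℝ) * ((vh (t + x)) ^ (2 * k - 1) * vh (t - x))
        - 2 * (k:ℝ) * (vh (t + x) * (vh (t - x)) ^ (2 * k - 1))))
        = 2 * M - 2 * (k:ℝ) * Φ (2 * x) - 2 * (k:ℝ) * Φ (-(2 * x)) := hinner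
    rw [integral_congr_ae (Filter.Eventually.of_forall hcong)]
    have hIa : IntegrableOn (fun _ : ℝ => 2 * M) X volume :=
      integrableOn_const hXf
    have hIb : IntegrableOn (fun x => 2 * (k:ℝ) * Φ (2 * x)) X volume :=
      (hΦ2X'.mono_set hXsub).const_mul _
    have hIc : IntegrableOn (fun x => 2 * (k:ℝ) * Φ (-(2 * x))) X volume :=
      (hΦm2X'.mono_set hXsub).const_mul _
    have hIab : IntegrableOn (fun x => 2 * M - 2 * (k:ℝ) * Φ (2 * x)) X volume := hIa.sub hIb
    rw [integral_sub hIab hIc, integral_sub hIa hIb, setIntegral_const,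
      integral_const_mul, integral_const_mul, hXdef, measureReal_def, Real.volume_Ioo,
      ENNReal.toReal_ofReal (by nlinarith : (0:ℝ) ≤ π - α * π - α * π), smul_eq_mul]
    ring
  constructor
  · rw [hbox, ge_iff_le]
    refine le_trans ?_ hmono
    rw [hGval, hsplit2, hsplitm2]
    have habs2 := (abs_le.1 hDb2).1
    have habsm2 := (abs_le.1 hDbm2).1
    have hknn : (0:ℝ) ≤ 2 * (k:ℝ) := by linarith
    have q2 := mul_le_mul_of_nonneg_left habs2 hknn
    have q3 := mul_le_mul_of_nonneg_left habsm2 hknn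
    linarith [q2, q3]
  · have h15 : 4 * (1 + 2 * (k:ℝ)) * α ≤ 1 := by rw [mul_comm] at hα4; exact hα4
    have hnn : (0:ℝ) ≤ 1 - 4 * (1 + 2 * (k:ℝ)) * α := by linarith
    have r0 : (0:ℝ) ≤ π * M * (1 - 4 * (1 + 2 * (k:ℝ)) * α) :=
      mul_nonneg (mul_nonneg hπ.le hM0) hnn
    linarith [r0]
end

section
/- Let k be a positive integer, B continuous on the closure of Ω := 𝕋 × (0,π) with B ≥ 0 on Ω. Set α_1 := 1/8 and α_k := 1/(4(1+2k)) for k ≥ 2, and c_k(B) := 4^{-k} min over the closure of Ω_{α_k} of B. Then for every v of the form v(t,x) = v̂(t+x) - v̂(t-x) with v̂ ∈ L^{2k}(𝕋) of zero average, ∫_Ω B v^{2k} ≥ c_k(B) ∫_Ω v^{2k}. -/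
open MeasureTheory Real Set
open scoped ENNReal

/-- Lintegral of a periodic function over a period is shift invariant. -/
lemma aux_perL {T : ℝ} (hT : 0 < T) (ψ : ℝ → ℝ≥0∞) (hm : Measurable ψ)
    (hp : Function.Periodic ψ T) (a : ℝ) :
    ∫⁻ t in Ioc 0 T, ψ (t + a) = ∫⁻ t in Ioc 0 T, ψ t := by
  have h1 : ∫⁻ t in Ioc 0 T, ψ (t + a) = ∫⁻ t in Ioc a (a + T), ψ t := by
    have hmp : MeasurePreserving (fun t : ℝ => t + a) volume volume :=
      measurePreserving_add_right volume a
    have hpre : (fun t : ℝ => t + a) ⁻¹' Ioc a (a + T) = Ioc 0 T := by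
      ext t
      simp only [Set.mem_preimage, Set.mem_Ioc]
      constructor <;> rintro ⟨h1, h2⟩ <;> constructor <;> linarith
    rw [← hpre]
    exact hmp.setLIntegral_comp_preimage measurableSet_Ioc hm
  rw [h1]
  haveI : VAddInvariantMeasure (AddSubgroup.zmultiples T) ℝ volume :=
    ⟨fun c s _ => measure_preimage_add _ _ _⟩
  have := MeasureTheory.IsAddFundamentalDomain.setLIntegral_eq
    (isAddFundamentalDomain_Ioc hT a) (isAddFundamentalDomain_Ioc hT 0) ψ
    hp.map_vadd_zmultiples
  simpa using this

/-- Shift a set lintegral over an interval. -/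
lemma aux_shift (g : ℝ → ℝ≥0∞) (hm : Measurable g) (a b x : ℝ) :
    ∫⁻ u in Ioo a b, g (u - x) = ∫⁻ u in Ioo (a - x) (b - x), g u := by
  have hmp : MeasurePreserving (fun u : ℝ => u - x) volume volume := by
    simpa [sub_eq_add_neg] using measurePreserving_add_right (volume : Measure ℝ) (-x)
  have hpre : (fun u : ℝ => u - x) ⁻¹' Ioo (a - x) (b - x) = Ioo a b := by
    ext u
    simp only [Set.mem_preimage, Set.mem_Ioo]
    constructor <;> rintro ⟨h1, h2⟩ <;> constructor <;> linarith
  rw [← hpre]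
  exact hmp.setLIntegral_comp_preimage measurableSet_Ioo hm

set_option maxHeartbeats 1000000 in
theorem stmt_16 (k : ℕ) (hk : 0 < k) (B : ℝ × ℝ → ℝ)
    (hBper : ∀ t x, B (t + 2 * π, x) = B (t, x))
    (hBc : ContinuousOn B ((Icc 0 (2 * π)) ×ˢ (Icc 0 π)))
    (hB0 : ∀ z ∈ (Ioc 0 (2 * π)) ×ˢ (Ioo 0 π), 0 ≤ B z)
    (αk : ℝ) (hαk : αk = if k = 1 then 1/8 else 1 / (4 * (1 + 2 * (k : ℝ))))
    (c : ℝ)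
    (hc : c = (1 / 4 ^ k) * sInf (B '' ((Icc 0 (2 * π)) ×ˢ (Icc (αk * π) (π - αk * π)))))
    (vh : ℝ → ℝ) (hper : Function.Periodic vh (2 * π)) (hmeas : Measurable vh)
    (hint : IntegrableOn (fun s => (vh s) ^ (2 * k)) (Ioc 0 (2 * π)))
    (havg : ∫ s in Ioc 0 (2 * π), vh s = 0) :
    (∫ z in (Ioc 0 (2 * π)) ×ˢ (Ioo 0 π),
        B z * (vh (z.1 + z.2) - vh (z.1 - z.2)) ^ (2 * k)) ≥
      c * ∫ z in (Ioc 0 (2 * π)) ×ˢ (Ioo 0 π), (vh (z.1 + z.2) - vh (z.1 - z.2)) ^ (2 * k) := by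
  have hπ : 0 < π := pi_pos
  set T : ℝ := 2 * π with hTdef
  have hTpos : 0 < T := by positivity
  set p : ℕ := 2 * k with hpdef
  have hp2 : 2 ≤ p := by omega
  have hpeven : Even p := even_two_mul k
  -- basic facts about αk
  have hα0 : 0 < αk := by
    rcases eq_or_ne k 1 with h | h
    · rw [hαk, if_pos h]; norm_num
    · rw [hαk, if_neg h]
      have : (0:ℝ) < 1 + 2 * (k:ℝ) := by positivity
      positivity
  have hα8 : αk ≤ 1 / 8 := by
    rcases eq_or_ne k 1 with h | h
    · rw [hαk, if_pos h]
    · rw [hαk, if_neg h]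
      have hk2 : (2:ℝ) ≤ (k:ℝ) := by
        have : 2 ≤ k := by omega
        exact_mod_cast this
      rw [div_le_div_iff₀ (by nlinarith) (by norm_num)]
      nlinarith
  set S : Set ℝ := Ioc 0 T with hSdef
  -- the basic ENNReal-valued integrand
  set Φ : ℝ → ℝ → ℝ≥0∞ := fun y t => ENNReal.ofReal ((vh (t + y) - vh t) ^ p) with hΦdef
  have hΦm : Measurable (Function.uncurry Φ) := by
    apply Measurable.ennreal_ofReal
    exact ((hmeas.comp (measurable_snd.add measurable_fst)).sub
      (hmeas.comp measurable_snd)).pow_const p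
  have hΦym : ∀ y, Measurable (Φ y) := by
    intro y
    exact (((hmeas.comp (measurable_add_const y)).sub hmeas).pow_const p).ennreal_ofReal
  have hΦper : ∀ y, Function.Periodic (Φ y) T := by
    intro y t
    simp only [hΦdef]
    rw [show t + T + y = (t + y) + T by ring, hper (t + y), hper t]
  set G : ℝ → ℝ≥0∞ := fun y => ∫⁻ t in S, Φ y t with hGdef
  have hGm : Measurable G := by
    have : Measurable fun y => ∫⁻ t, Φ y t ∂(volume.restrict S) :=
      Measurable.lintegral_prod_right' hΦm
    exact this
  have key_shift : ∀ y a, (∫⁻ t in S, Φ y (t + a)) = G y := fun y a =>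
    aux_perL hTpos (Φ y) (hΦym y) (hΦper y) a
  -- periodicity and evenness of G
  have hGper : ∀ y, G (y + T) = G y := by
    intro y
    apply lintegral_congr
    intro t
    simp only [hΦdef]
    rw [show t + (y + T) = (t + y) + T by ring, hper (t + y)]
  have hGeven : ∀ y, G (-y) = G y := by
    intro y
    have h1 : ∀ t, Φ (-y) t = Φ y (t + -y) := by
      intro t
      simp only [hΦdef]
      rw [show t + -y + y = t by ring]
      congr 1
      rw [show vh (t + -y) - vh t = -(vh t - vh (t + -y)) by ring, hpeven.neg_pow]
    calc G (-y) = ∫⁻ t in S, Φ y (t + -y) := lintegral_congr h1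
      _ = G y := key_shift y (-y)
  -- subadditivity-type inequality for G
  have hGsub : ∀ y z, G y ≤ 2 ^ (p - 1) * (G z + G (y - z)) := by
    intro y z
    have hpt : ∀ t, Φ y t ≤ ENNReal.ofReal ((2:ℝ) ^ (p - 1)) *
        (Φ z (t + (y - z)) + Φ (y - z) t) := by
      intro t
      simp only [hΦdef]
      rw [show t + (y - z) + z = t + y by ring]
      rw [← ENNReal.ofReal_add (hpeven.pow_nonneg _) (hpeven.pow_nonneg _),
        ← ENNReal.ofReal_mul (by positivity)]
      apply ENNReal.ofReal_le_ofReal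
      set a := vh (t + y); set b := vh t; set d := vh (t + (y - z))
      calc (a - b) ^ p = |a - b| ^ p := (hpeven.pow_abs _).symm
        _ ≤ (|a - d| + |d - b|) ^ p := by
            apply pow_le_pow_left₀ (abs_nonneg _) (abs_sub_le a d b)
        _ ≤ 2 ^ (p - 1) * (|a - d| ^ p + |d - b| ^ p) :=
            add_pow_le (abs_nonneg _) (abs_nonneg _) p
        _ = 2 ^ (p - 1) * ((a - d) ^ p + (d - b) ^ p) := by
            rw [hpeven.pow_abs, hpeven.pow_abs]
    have hofp : ENNReal.ofReal ((2:ℝ) ^ (p - 1)) = (2 : ℝ≥0∞) ^ (p - 1) := by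
      rw [ENNReal.ofReal_pow (by norm_num)]
      norm_num
    calc G y ≤ ∫⁻ t in S, ENNReal.ofReal ((2:ℝ) ^ (p - 1)) *
          (Φ z (t + (y - z)) + Φ (y - z) t) := lintegral_mono hpt
      _ = ENNReal.ofReal ((2:ℝ) ^ (p - 1)) *
          ((∫⁻ t in S, Φ z (t + (y - z))) + ∫⁻ t in S, Φ (y - z) t) := by
          have hm1 : Measurable fun t : ℝ => Φ z (t + (y - z)) :=
            (hΦym z).comp (measurable_add_const (y - z))
          rw [lintegral_const_mul _ (f := fun t => Φ z (t + (y - z)) + Φ (y - z) t) (hm1.add (hΦym (y - z))), lintegral_add_left hm1]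
      _ = 2 ^ (p - 1) * (G z + G (y - z)) := by rw [key_shift z (y - z), hofp]
  -- middle region
  set Mid : Set ℝ := Ioo (αk * π) (π - αk * π) with hMiddef
  set M : ℝ≥0∞ := ∫⁻ x in Mid, G (2 * x) with hMdef
  have hg2m : Measurable fun x : ℝ => G (2 * x) := hGm.comp (measurable_const_mul 2)
  set J : Set ℝ := Ioo (2 * (αk * π)) (π - αk * π) with hJdef
  have hvolJ : volume J = ENNReal.ofReal (π - 3 * (αk * π)) := by
    rw [hJdef, Real.volume_Ioo]
    congr 1
    ring
  have hvolJ0 : volume J ≠ 0 := by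
    rw [hvolJ]
    simp only [ne_eq, ENNReal.ofReal_eq_zero, not_le]
    nlinarith
  have hvolJtop : volume J ≠ ⊤ := by rw [hvolJ]; exact ENNReal.ofReal_ne_top
  -- the key bound for small x
  have hbad : ∀ x ∈ Ioc 0 (αk * π), G (2 * x) ≤ 2 ^ p * M / volume J := by
    intro x hx
    rw [ENNReal.le_div_iff_mul_le (Or.inl hvolJ0) (Or.inl hvolJtop)]
    have h1 : ∀ u ∈ J, G (2 * x) ≤ 2 ^ (p - 1) * (G (2 * u) + G (2 * (u - x))) := by
      intro u _
      have h2 := hGsub (2 * x) (2 * u)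
      have h3 : G (2 * x - 2 * u) = G (2 * (u - x)) := by
        rw [show 2 * x - 2 * u = -(2 * (u - x)) by ring, hGeven]
      rwa [h3] at h2
    have hmG2 : Measurable fun u : ℝ => G (2 * (u - x)) :=
      hGm.comp ((measurable_sub_const x).const_mul 2)
    have hmeas2 : Measurable fun u : ℝ => 2 ^ (p - 1) * (G (2 * u) + G (2 * (u - x))) := by
      apply Measurable.const_mul
      exact hg2m.add hmG2
    calc G (2 * x) * volume J = ∫⁻ _ in J, G (2 * x) := (setLIntegral_const _ _).symm
      _ ≤ ∫⁻ u in J, 2 ^ (p - 1) * (G (2 * u) + G (2 * (u - x))) :=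
          setLIntegral_mono hmeas2 h1
      _ = 2 ^ (p - 1) * ((∫⁻ u in J, G (2 * u)) + ∫⁻ u in J, G (2 * (u - x))) := by
          rw [lintegral_const_mul _ (f := fun u => G (2 * u) + G (2 * (u - x))) (hg2m.add hmG2), lintegral_add_left hg2m]
      _ ≤ 2 ^ (p - 1) * (M + M) := by
          gcongr
          · apply lintegral_mono_set
            rw [hJdef, hMiddef]
            apply Ioo_subset_Ioo le_rfl le_rfl |>.trans
            apply Ioo_subset_Ioo _ le_rfl
            nlinarith [hx.1]
          · have hsh : (∫⁻ u in J, G (2 * (u - x))) =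
                ∫⁻ u in Ioo (2 * (αk * π) - x) (π - αk * π - x), G (2 * u) := by
              have := aux_shift (fun u => G (2 * u)) hg2m (2 * (αk * π)) (π - αk * π) x
              exact this
            rw [hsh]
            apply lintegral_mono_set
            apply Ioo_subset_Ioo
            · nlinarith [hx.2]
            · nlinarith [hx.1]
      _ = 2 ^ p * M := by
          rw [← two_mul, show (2:ℝ≥0∞) ^ (p-1) * (2 * M) = (2 ^ (p-1) * 2) * M by ring,
            ← pow_succ]
          congr 2
          omega
  -- bound for large x via symmetry
  have hbad2 : ∀ x ∈ Ico (π - αk * π) π, G (2 * x) ≤ 2 ^ p * M / volume J := by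
    intro x hx
    have h1 : G (2 * x) = G (2 * (π - x)) := by
      have e1 : G (2 * x) = G (2 * x - T) := by
        have := hGper (2 * x - T)
        rw [show 2 * x - T + T = 2 * x by ring] at this
        exact this
      have e2 : G (2 * x - T) = G (2 * (π - x)) := by
        rw [show 2 * x - T = -(2 * (π - x)) by rw [hTdef]; ring, hGeven]
      rw [e1, e2]
    rw [h1]
    apply hbad
    constructor
    · nlinarith [hx.2]
    · nlinarith [hx.1]
  -- total
  set Tot : ℝ≥0∞ := ∫⁻ x in Ioo 0 π, G (2 * x) with hTotdef
  -- covering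
  have hTot_le : Tot ≤ 4 ^ k * M := by
    have hcover : Ioo 0 π ⊆ (Ioc 0 (αk * π) ∪ Ico (π - αk * π) π) ∪ Mid := by
      intro x hx
      rcases le_or_gt x (αk * π) with h | h
      · exact Or.inl (Or.inl ⟨hx.1, h⟩)
      rcases le_or_gt (π - αk * π) x with h' | h'
      · exact Or.inl (Or.inr ⟨h', hx.2⟩)
      · exact Or.inr ⟨h, h'⟩
    set K : ℝ≥0∞ := 2 ^ p * M / volume J with hKdef
    have hb1 : (∫⁻ x in Ioc 0 (αk * π), G (2 * x)) ≤ K * ENNReal.ofReal (αk * π) := by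
      calc (∫⁻ x in Ioc 0 (αk * π), G (2 * x)) ≤ ∫⁻ _ in Ioc 0 (αk * π), K :=
            setLIntegral_mono measurable_const hbad
        _ = K * ENNReal.ofReal (αk * π) := by rw [setLIntegral_const, Real.volume_Ioc, sub_zero]
    have hb2 : (∫⁻ x in Ico (π - αk * π) π, G (2 * x)) ≤ K * ENNReal.ofReal (αk * π) := by
      calc (∫⁻ x in Ico (π - αk * π) π, G (2 * x)) ≤ ∫⁻ _ in Ico (π - αk * π) π, K :=
            setLIntegral_mono measurable_const hbad2
        _ = K * ENNReal.ofReal (αk * π) := by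
            rw [setLIntegral_const, Real.volume_Ico]
            congr 2
            ring
    have hsplit : Tot ≤ (K * ENNReal.ofReal (αk * π) + K * ENNReal.ofReal (αk * π)) + M := by
      calc Tot ≤ ∫⁻ x in (Ioc 0 (αk * π) ∪ Ico (π - αk * π) π) ∪ Mid, G (2 * x) :=
            lintegral_mono_set hcover
        _ ≤ (∫⁻ x in Ioc 0 (αk * π) ∪ Ico (π - αk * π) π, G (2 * x)) + M :=
            lintegral_union_le _ _ _
        _ ≤ ((∫⁻ x in Ioc 0 (αk * π), G (2 * x)) + ∫⁻ x in Ico (π - αk * π) π, G (2 * x)) + M := by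
            gcongr
            exact lintegral_union_le _ _ _
        _ ≤ (K * ENNReal.ofReal (αk * π) + K * ENNReal.ofReal (αk * π)) + M := by gcongr
    -- now numeric bound: K * ofReal (αk * π) ≤ 2^p * ofReal (1/5) * M
    have hKb : K * ENNReal.ofReal (αk * π) ≤ 2 ^ p * ENNReal.ofReal (1/5) * M := by
      rw [hKdef, hvolJ]
      rw [ENNReal.div_eq_inv_mul]
      rw [show (ENNReal.ofReal (π - 3 * (αk * π)))⁻¹ * (2 ^ p * M) * ENNReal.ofReal (αk * π)
        = (ENNReal.ofReal (αk * π) / ENNReal.ofReal (π - 3 * (αk * π))) * (2 ^ p * M) by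
          rw [ENNReal.div_eq_inv_mul]; ring]
      rw [show (2:ℝ≥0∞) ^ p * ENNReal.ofReal (1/5) * M = ENNReal.ofReal (1/5) * (2 ^ p * M) by
        ring]
      gcongr
      apply ENNReal.div_le_of_le_mul
      rw [← ENNReal.ofReal_mul (by norm_num)]
      apply ENNReal.ofReal_le_ofReal
      nlinarith
    have hnum : (1 : ℝ≥0∞) + (2 ^ p * ENNReal.ofReal (1/5) + 2 ^ p * ENNReal.ofReal (1/5))
        ≤ 4 ^ k := by
      have h4 : (4 : ℝ≥0∞) ^ k = 2 ^ p := by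
        rw [hpdef, pow_mul]
        norm_num
      rw [h4]
      have e1 : (2:ℝ≥0∞) ^ p = ENNReal.ofReal ((2:ℝ) ^ p) := by
        rw [ENNReal.ofReal_pow (by norm_num)]; norm_num
      rw [e1, ← ENNReal.ofReal_mul (by positivity), ← ENNReal.ofReal_add (by positivity)
        (by positivity), ← ENNReal.ofReal_one, ← ENNReal.ofReal_add (by norm_num)
        (by positivity)]
      apply ENNReal.ofReal_le_ofReal
      have h2p : (4:ℝ) ≤ 2 ^ p := by
        calc (4:ℝ) = 2 ^ 2 := by norm_num
          _ ≤ 2 ^ p := pow_le_pow_right₀ (by norm_num) hp2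
      nlinarith
    calc Tot ≤ (K * ENNReal.ofReal (αk * π) + K * ENNReal.ofReal (αk * π)) + M := hsplit
      _ ≤ (2 ^ p * ENNReal.ofReal (1/5) * M + 2 ^ p * ENNReal.ofReal (1/5) * M) + M := by gcongr
      _ = (1 + (2 ^ p * ENNReal.ofReal (1/5) + 2 ^ p * ENNReal.ofReal (1/5))) * M := by ring
      _ ≤ 4 ^ k * M := by gcongr
  -- Tonelli reduction
  have hfm : Measurable fun z : ℝ × ℝ => (vh (z.1 + z.2) - vh (z.1 - z.2)) ^ p :=
    ((hmeas.comp (measurable_fst.add measurable_snd)).sub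
      (hmeas.comp (measurable_fst.sub measurable_snd))).pow_const p
  have hfnn : ∀ z : ℝ × ℝ, 0 ≤ (vh (z.1 + z.2) - vh (z.1 - z.2)) ^ p := fun z =>
    hpeven.pow_nonneg _
  have tonelli : ∀ X' : Set ℝ, MeasurableSet X' →
      (∫⁻ z in S ×ˢ X', ENNReal.ofReal ((vh (z.1 + z.2) - vh (z.1 - z.2)) ^ p)) =
      ∫⁻ x in X', G (2 * x) := by
    intro X' hX'
    have hFm : Measurable fun z : ℝ × ℝ => ENNReal.ofReal ((vh (z.1 + z.2) - vh (z.1 - z.2)) ^ p) :=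
      hfm.ennreal_ofReal
    rw [Measure.volume_eq_prod, ← Measure.prod_restrict S X',
      lintegral_prod_symm _ hFm.aemeasurable]
    apply lintegral_congr
    intro x
    have h1 : ∀ t, ENNReal.ofReal ((vh (t + x) - vh (t - x)) ^ p) = Φ (2 * x) (t + -x) := by
      intro t
      simp only [hΦdef]
      rw [show t + -x + 2 * x = t + x by ring, show t + -x = t - x by ring]
    calc (∫⁻ t in S, ENNReal.ofReal ((vh (t + x) - vh (t - x)) ^ p)) =
        ∫⁻ t in S, Φ (2 * x) (t + -x) := lintegral_congr h1
      _ = G (2 * x) := key_shift (2 * x) (-x)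
  -- finiteness
  have hV : (∫⁻ s in S, ENNReal.ofReal (vh s ^ p)) < ⊤ := by
    have h1 := hint.2
    rw [hasFiniteIntegral_iff_norm] at h1
    have h2 : ∀ s : ℝ, ENNReal.ofReal (vh s ^ p) = ENNReal.ofReal ‖vh s ^ (2 * k)‖ := by
      intro s
      rw [Real.norm_of_nonneg (hpeven.pow_nonneg _)]
    calc (∫⁻ s in S, ENNReal.ofReal (vh s ^ p)) =
        ∫⁻ s in S, ENNReal.ofReal ‖vh s ^ (2 * k)‖ := lintegral_congr h2
      _ < ⊤ := h1
  set V : ℝ≥0∞ := ∫⁻ s in S, ENNReal.ofReal (vh s ^ p) with hVdef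
  have hGbd : ∀ y, G y ≤ 2 ^ p * V := by
    intro y
    have hpt : ∀ t, Φ y t ≤ ENNReal.ofReal ((2:ℝ) ^ (p - 1)) *
        (ENNReal.ofReal (vh (t + y) ^ p) + ENNReal.ofReal (vh t ^ p)) := by
      intro t
      simp only [hΦdef]
      rw [← ENNReal.ofReal_add (hpeven.pow_nonneg _) (hpeven.pow_nonneg _),
        ← ENNReal.ofReal_mul (by positivity)]
      apply ENNReal.ofReal_le_ofReal
      set a := vh (t + y); set b := vh t
      calc (a - b) ^ p = |a - b| ^ p := (hpeven.pow_abs _).symm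
        _ ≤ (|a| + |b|) ^ p := pow_le_pow_left₀ (abs_nonneg _) (abs_sub _ _) p
        _ ≤ 2 ^ (p - 1) * (|a| ^ p + |b| ^ p) := add_pow_le (abs_nonneg _) (abs_nonneg _) p
        _ = 2 ^ (p - 1) * (a ^ p + b ^ p) := by rw [hpeven.pow_abs, hpeven.pow_abs]
    have hvm : Measurable fun s : ℝ => ENNReal.ofReal (vh s ^ p) :=
      (hmeas.pow_const p).ennreal_ofReal
    have hvper : Function.Periodic (fun s : ℝ => ENNReal.ofReal (vh s ^ p)) T := by
      intro s
      show ENNReal.ofReal (vh (s + T) ^ p) = ENNReal.ofReal (vh s ^ p)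
      rw [hper s]
    have hsh : (∫⁻ t in S, ENNReal.ofReal (vh (t + y) ^ p)) = V :=
      aux_perL hTpos _ hvm hvper y
    have hofp : ENNReal.ofReal ((2:ℝ) ^ (p - 1)) = (2 : ℝ≥0∞) ^ (p - 1) := by
      rw [ENNReal.ofReal_pow (by norm_num)]; norm_num
    calc G y ≤ ∫⁻ t in S, ENNReal.ofReal ((2:ℝ) ^ (p - 1)) *
          (ENNReal.ofReal (vh (t + y) ^ p) + ENNReal.ofReal (vh t ^ p)) := lintegral_mono hpt
      _ = ENNReal.ofReal ((2:ℝ) ^ (p - 1)) *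
          ((∫⁻ t in S, ENNReal.ofReal (vh (t + y) ^ p)) + V) := by
          have hvm2 : Measurable fun t : ℝ => ENNReal.ofReal (vh (t + y) ^ p) :=
            hvm.comp (measurable_add_const y)
          rw [lintegral_const_mul _ (f := fun t => ENNReal.ofReal (vh (t + y) ^ p) + ENNReal.ofReal (vh t ^ p)) (hvm2.add hvm), lintegral_add_left hvm2]
      _ = 2 ^ (p - 1) * (V + V) := by rw [hsh, hofp]
      _ = 2 ^ p * V := by
          rw [← two_mul, show (2:ℝ≥0∞) ^ (p-1) * (2 * V) = (2 ^ (p-1) * 2) * V by ring,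
            ← pow_succ]
          congr 2
          omega
  have hTotfin : Tot < ⊤ := by
    have : Tot ≤ (2 ^ p * V) * ENNReal.ofReal π := by
      calc Tot ≤ ∫⁻ _ in Ioo 0 π, 2 ^ p * V :=
            setLIntegral_mono measurable_const (fun x _ => hGbd (2 * x))
        _ = (2 ^ p * V) * ENNReal.ofReal π := by rw [setLIntegral_const, Real.volume_Ioo, sub_zero]
    apply lt_of_le_of_lt this
    apply ENNReal.mul_lt_top
    · exact ENNReal.mul_lt_top (ENNReal.pow_lt_top (by norm_num)) hV
    · exact ENNReal.ofReal_lt_top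
  have hMfin : M < ⊤ := by
    apply lt_of_le_of_lt _ hTotfin
    apply lintegral_mono_set
    rw [hMiddef]
    apply Ioo_subset_Ioo
    · positivity
    · nlinarith
  -- Bochner conversions
  have hDm : MeasurableSet (S ×ˢ Ioo 0 π) := measurableSet_Ioc.prod measurableSet_Ioo
  have hDmidm : MeasurableSet (S ×ˢ Mid) := measurableSet_Ioc.prod measurableSet_Ioo
  have hconv : ∀ X' : Set ℝ, MeasurableSet X' →
      (∫ z in S ×ˢ X', (vh (z.1 + z.2) - vh (z.1 - z.2)) ^ p) =
      (∫⁻ x in X', G (2 * x)).toReal := by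
    intro X' hX'
    rw [integral_eq_lintegral_of_nonneg_ae (Filter.Eventually.of_forall (fun z => hfnn z))
      hfm.aestronglyMeasurable, tonelli X' hX']
  have hRHS : (∫ z in S ×ˢ Ioo 0 π, (vh (z.1 + z.2) - vh (z.1 - z.2)) ^ p) = Tot.toReal :=
    hconv _ measurableSet_Ioo
  have hMidR : (∫ z in S ×ˢ Mid, (vh (z.1 + z.2) - vh (z.1 - z.2)) ^ p) = M.toReal :=
    hconv _ measurableSet_Ioo
  -- integrability of f on D
  have hf_int : IntegrableOn (fun z : ℝ × ℝ => (vh (z.1 + z.2) - vh (z.1 - z.2)) ^ p)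
      (S ×ˢ Ioo 0 π) := by
    refine ⟨hfm.aestronglyMeasurable, ?_⟩
    rw [hasFiniteIntegral_iff_norm]
    have h2 : ∀ z : ℝ × ℝ, ENNReal.ofReal ‖(vh (z.1 + z.2) - vh (z.1 - z.2)) ^ p‖ =
        ENNReal.ofReal ((vh (z.1 + z.2) - vh (z.1 - z.2)) ^ p) := by
      intro z; rw [Real.norm_of_nonneg (hfnn z)]
    calc (∫⁻ z in S ×ˢ Ioo 0 π, ENNReal.ofReal ‖(vh (z.1 + z.2) - vh (z.1 - z.2)) ^ p‖) =
        ∫⁻ z in S ×ˢ Ioo 0 π, ENNReal.ofReal ((vh (z.1 + z.2) - vh (z.1 - z.2)) ^ p) :=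
          lintegral_congr h2
      _ = Tot := tonelli _ measurableSet_Ioo
      _ < ⊤ := hTotfin
  -- B bounds
  have hsub1 : S ×ˢ Ioo 0 π ⊆ Icc 0 T ×ˢ Icc 0 π :=
    Set.prod_mono Ioc_subset_Icc_self Ioo_subset_Icc_self
  have hB0' : ∀ z ∈ (Icc 0 T) ×ˢ (Icc 0 π), 0 ≤ B z := by
    intro z hz
    have hcl : closure ((Ioc 0 T) ×ˢ (Ioo 0 π)) = (Icc 0 T) ×ˢ (Icc 0 π) := by
      rw [closure_prod_eq, closure_Ioc (ne_of_lt hTpos), closure_Ioo (ne_of_lt hπ)]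
    have hzc : z ∈ closure ((Ioc 0 T) ×ˢ (Ioo 0 π)) := by rw [hcl]; exact hz
    have hne : (nhdsWithin z ((Ioc 0 T) ×ˢ (Ioo 0 π))).NeBot :=
      mem_closure_iff_nhdsWithin_neBot.1 hzc
    have ht : Filter.Tendsto B (nhdsWithin z ((Ioc 0 T) ×ˢ (Ioo 0 π))) (nhds (B z)) :=
      (hBc z hz).mono_left (nhdsWithin_mono z hsub1)
    exact ge_of_tendsto ht (eventually_mem_nhdsWithin.mono (fun w hw => hB0 w hw))
  set m : ℝ := sInf (B '' ((Icc 0 T) ×ˢ (Icc (αk * π) (π - αk * π)))) with hmdef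
  set Kc : Set (ℝ × ℝ) := (Icc 0 T) ×ˢ (Icc (αk * π) (π - αk * π)) with hKcdef
  have hKsub : Kc ⊆ (Icc 0 T) ×ˢ (Icc 0 π) := by
    apply Set.prod_mono subset_rfl
    apply Icc_subset_Icc
    · positivity
    · nlinarith
  have hKcpt : IsCompact Kc := isCompact_Icc.prod isCompact_Icc
  have hbddK : BddBelow (B '' Kc) := (hKcpt.image_of_continuousOn (hBc.mono hKsub)).bddBelow
  have hm0 : 0 ≤ m := by
    apply Real.sInf_nonneg
    rintro x ⟨z, hz, rfl⟩
    exact hB0' z (hKsub hz)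
  have hmle : ∀ z ∈ S ×ˢ Mid, m ≤ B z := by
    intro z hz
    apply csInf_le hbddK
    refine ⟨z, ?_, rfl⟩
    refine ⟨Ioc_subset_Icc_self hz.1, Ioo_subset_Icc_self hz.2⟩
  -- integrability of B * f
  have hBmeasD : AEStronglyMeasurable B (volume.restrict (S ×ˢ Ioo 0 π)) := by
    apply ContinuousOn.aestronglyMeasurable (hBc.mono hsub1) hDm
  obtain ⟨C, hC⟩ := hKcpt.exists_bound_of_continuousOn (hBc.mono hKsub)
  obtain ⟨C', hC'⟩ := (isCompact_Icc.prod isCompact_Icc).exists_bound_of_continuousOn hBc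
  have hBf_int : IntegrableOn (fun z : ℝ × ℝ => B z * (vh (z.1 + z.2) - vh (z.1 - z.2)) ^ p)
      (S ×ˢ Ioo 0 π) := by
    apply Integrable.bdd_mul hf_int hBmeasD
    apply (ae_restrict_iff' hDm).2
    exact Filter.Eventually.of_forall (fun z hz => hC' z (hsub1 hz))
  have hsubMid : S ×ˢ Mid ⊆ S ×ˢ Ioo 0 π := by
    apply Set.prod_mono subset_rfl
    rw [hMiddef]
    apply Ioo_subset_Ioo
    · positivity
    · nlinarith
  -- step 1: LHS ≥ m * M.toReal
  have hstep1 : (∫ z in S ×ˢ Ioo 0 π, B z * (vh (z.1 + z.2) - vh (z.1 - z.2)) ^ p) ≥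
      m * M.toReal := by
    have h1 : (∫ z in S ×ˢ Ioo 0 π, B z * (vh (z.1 + z.2) - vh (z.1 - z.2)) ^ p) ≥
        ∫ z in S ×ˢ Mid, B z * (vh (z.1 + z.2) - vh (z.1 - z.2)) ^ p := by
      apply setIntegral_mono_set hBf_int
      · apply (ae_restrict_iff' hDm).2
        apply Filter.Eventually.of_forall
        intro z hz
        exact mul_nonneg (hB0 z hz) (hfnn z)
      · exact HasSubset.Subset.eventuallyLE hsubMid
    have h2 : (∫ z in S ×ˢ Mid, B z * (vh (z.1 + z.2) - vh (z.1 - z.2)) ^ p) ≥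
        ∫ z in S ×ˢ Mid, m * (vh (z.1 + z.2) - vh (z.1 - z.2)) ^ p := by
      apply setIntegral_mono_on ((hf_int.mono_set hsubMid).const_mul m)
        (hBf_int.mono_set hsubMid) hDmidm
      intro z hz
      exact mul_le_mul_of_nonneg_right (hmle z hz) (hfnn z)
    have h3 : (∫ z in S ×ˢ Mid, m * (vh (z.1 + z.2) - vh (z.1 - z.2)) ^ p) = m * M.toReal := by
      rw [integral_const_mul, hMidR]
    linarith
  -- step 2
  have hstep2 : Tot.toReal ≤ 4 ^ k * M.toReal := by
    have h1 : (4 ^ k * M : ℝ≥0∞).toReal = 4 ^ k * M.toReal := by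
      rw [ENNReal.toReal_mul, ENNReal.toReal_pow]
      norm_num
    rw [← h1]
    apply ENNReal.toReal_mono _ hTot_le
    exact ENNReal.mul_ne_top (by simp) hMfin.ne
  -- finish
  rw [hRHS, hc]
  have h4pos : (0:ℝ) < 4 ^ k := by positivity
  calc (∫ z in S ×ˢ Ioo 0 π, B z * (vh (z.1 + z.2) - vh (z.1 - z.2)) ^ p) ≥ m * M.toReal :=
      hstep1
    _ ≥ m * ((1 / 4 ^ k) * Tot.toReal) := by
        apply mul_le_mul_of_nonneg_left _ hm0
        rw [div_mul_eq_mul_div, one_mul, div_le_iff₀ h4pos, mul_comm]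
        linarith
    _ = 1 / 4 ^ k * m * Tot.toReal := by ring
end
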